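/- arXiv:2605.03274 — 7 statements merged into one kernel-verified Lean document; each statement's English description precedes it below -/
import Mathlib

section
/- Let p be a prime, let Tr : GF(p^3) → GF(p) denote the algebra trace, and let F denote the image of the algebra map from GF(p) into GF(p^3). Suppose u, v, w, x are nonzero elements of the kernel of Tr and α is a nonzero element of F such that u·v = α·(w·x) in GF(p^3). Then either both u·w⁻¹ ∈ F and v·x⁻¹ ∈ F, or both u·x⁻¹ ∈ F and v·w⁻¹ ∈ F; equivalently, the cosets of u, v equal the cosets of w, x in some order in the quotient group GF(p^3)^× / GF(p)^×. -/
open Polynomial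

/-- An element of `GF(p^3)` satisfying a nontrivial equation of degree ≤ 2
over the prime field lies in the embedded prime field. -/
lemma quad_mem_range (p : ℕ) [Fact p.Prime] (β : GaloisField p 3) (a b c : ZMod p)
    (habc : ¬ (a = 0 ∧ b = 0 ∧ c = 0))
    (hroot : algebraMap (ZMod p) (GaloisField p 3) a * β ^ 2 +
      algebraMap (ZMod p) (GaloisField p 3) b * β +
      algebraMap (ZMod p) (GaloisField p 3) c = 0) :
    β ∈ Set.range (algebraMap (ZMod p) (GaloisField p 3)) := by
  set P : (ZMod p)[X] := C a * X ^ 2 + C b * X + C c with hP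
  have hPne : P ≠ 0 := by
    intro h0
    apply habc
    refine ⟨?_, ?_, ?_⟩
    · have := congrArg (fun q => Polynomial.coeff q 2) h0
      simpa [hP] using this
    · have := congrArg (fun q => Polynomial.coeff q 1) h0
      simpa [hP] using this
    · have := congrArg (fun q => Polynomial.coeff q 0) h0
      simpa [hP] using this
  have haev : Polynomial.aeval β P = 0 := by
    simpa [hP, Polynomial.aeval_add, Polynomial.aeval_mul] using hroot
  have hint : IsIntegral (ZMod p) β := IsIntegral.of_finite _ _
  have hdvd : (minpoly (ZMod p) β).natDegree ∣ 3 := by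
    have := minpoly.degree_dvd (K := ZMod p) (x := β) hint
    rwa [GaloisField.finrank p (by norm_num)] at this
  have hle : (minpoly (ZMod p) β).natDegree ≤ 2 := by
    have h1 : (minpoly (ZMod p) β).degree ≤ P.degree :=
      minpoly.degree_le_of_ne_zero _ _ hPne haev
    have h2 : (minpoly (ZMod p) β).natDegree ≤ P.natDegree :=
      Polynomial.natDegree_le_natDegree h1
    exact h2.trans (Polynomial.natDegree_quadratic_le)
  have h1 : (minpoly (ZMod p) β).natDegree = 1 := by
    rcases (Nat.prime_three.eq_one_or_self_of_dvd _ hdvd) with h | h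
    · exact h
    · omega
  exact (minpoly.natDegree_eq_one_iff).mp h1

lemma ker_trace_finrank (p : ℕ) [Fact p.Prime] :
    Module.finrank (ZMod p)
      (LinearMap.ker (Algebra.trace (ZMod p) (GaloisField p 3))) = 2 := by
  have hsurj : Function.Surjective (Algebra.trace (ZMod p) (GaloisField p 3)) :=
    Algebra.trace_surjective (ZMod p) (GaloisField p 3)
  have hrange : LinearMap.range (Algebra.trace (ZMod p) (GaloisField p 3)) = ⊤ :=
    LinearMap.range_eq_top.mpr hsurj
  have h := LinearMap.finrank_range_add_finrank_ker
    (Algebra.trace (ZMod p) (GaloisField p 3))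
  rw [hrange, finrank_top, GaloisField.finrank p (by norm_num),
    Module.finrank_self] at h
  omega

lemma span_pair_eq_ker (p : ℕ) [Fact p.Prime] (u w : GaloisField p 3)
    (hu : u ∈ LinearMap.ker (Algebra.trace (ZMod p) (GaloisField p 3)))
    (hw : w ∈ LinearMap.ker (Algebra.trace (ZMod p) (GaloisField p 3)))
    (hind : LinearIndependent (ZMod p) ![w, u]) :
    Submodule.span (ZMod p) {w, u}
      = LinearMap.ker (Algebra.trace (ZMod p) (GaloisField p 3)) := by
  have hle : Submodule.span (ZMod p) {w, u}
      ≤ LinearMap.ker (Algebra.trace (ZMod p) (GaloisField p 3)) := by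
    rw [Submodule.span_le]
    intro z hz
    rcases hz with rfl | hz
    · exact hw
    · rcases hz with rfl; exact hu
  have hcard : Module.finrank (ZMod p)
      (Submodule.span (ZMod p) (Set.range ![w, u])) = 2 := by
    rw [finrank_span_eq_card hind]
    simp
  have hr : Set.range ![w, u] = ({w, u} : Set (GaloisField p 3)) := by
    simp [Matrix.range_cons, Matrix.range_empty]
    exact Set.pair_comm u w
  rw [hr] at hcard
  exact Submodule.eq_of_le_of_finrank_le hle (by rw [hcard, ker_trace_finrank p])

/-- Singer quotient Sidon property: if `u, v, w, x` are nonzero elements of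
the kernel of the trace `Tr : GF(p^3) → GF(p)` and `α` is a nonzero element of
the embedded base field `F = range (algebraMap (ZMod p) (GaloisField p 3))`
with `u * v = α * (w * x)`, then the cosets of `u, v` equal the cosets of
`w, x` in some order: either `u * w⁻¹ ∈ F` and `v * x⁻¹ ∈ F`, or
`u * x⁻¹ ∈ F` and `v * w⁻¹ ∈ F`. -/
theorem singer_quotient_sidon (p : ℕ) [Fact p.Prime]
    (u v w x α : GaloisField p 3)
    (hu : u ∈ LinearMap.ker (Algebra.trace (ZMod p) (GaloisField p 3)))
    (hv : v ∈ LinearMap.ker (Algebra.trace (ZMod p) (GaloisField p 3)))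
    (hw : w ∈ LinearMap.ker (Algebra.trace (ZMod p) (GaloisField p 3)))
    (hx : x ∈ LinearMap.ker (Algebra.trace (ZMod p) (GaloisField p 3)))
    (hu0 : u ≠ 0) (hv0 : v ≠ 0) (hw0 : w ≠ 0) (hx0 : x ≠ 0)
    (hα : α ∈ Set.range (algebraMap (ZMod p) (GaloisField p 3))) (hα0 : α ≠ 0)
    (h : u * v = α * (w * x)) :
    (u * w⁻¹ ∈ Set.range (algebraMap (ZMod p) (GaloisField p 3)) ∧
      v * x⁻¹ ∈ Set.range (algebraMap (ZMod p) (GaloisField p 3))) ∨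
    (u * x⁻¹ ∈ Set.range (algebraMap (ZMod p) (GaloisField p 3)) ∧
      v * w⁻¹ ∈ Set.range (algebraMap (ZMod p) (GaloisField p 3))) := by
  set ι := algebraMap (ZMod p) (GaloisField p 3) with hι
  obtain ⟨e, he⟩ := hα
  have he0 : e ≠ 0 := by
    rintro rfl; apply hα0; rw [← he, map_zero]
  by_cases hcase : u * w⁻¹ ∈ Set.range ι
  · left
    refine ⟨hcase, ?_⟩
    obtain ⟨c, hc⟩ := hcase
    have hueq : u = ι c * w := by
      rw [hc]; field_simp
    have hc0 : ι c ≠ 0 := by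
      intro h0; apply hu0; rw [hueq, h0, zero_mul]
    have hcz : c ≠ 0 := by
      intro h0; apply hc0; rw [h0, map_zero]
    have hkey : v * ι c = α * x := by
      rw [hueq] at h
      apply mul_left_cancel₀ hw0
      linear_combination h
    refine ⟨e * c⁻¹, ?_⟩
    rw [map_mul, map_inv₀, he]
    field_simp [hc0, hx0]
    linear_combination -hkey
  · right
    -- u * w⁻¹ ∉ F; show u, w are linearly independent over GF(p)
    have hind : LinearIndependent (ZMod p) ![w, u] := by
      rw [LinearIndependent.pair_iff' hw0]
      intro a ha
      apply hcase
      refine ⟨a, ?_⟩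
      rw [← ha, Algebra.smul_def]
      field_simp
      rfl
    have hspan := span_pair_eq_ker p u w hu hw hind
    obtain ⟨a, b, hab⟩ := Submodule.mem_span_pair.mp (hspan ▸ hv)
    obtain ⟨c, d, hcd⟩ := Submodule.mem_span_pair.mp (hspan ▸ hx)
    rw [Algebra.smul_def, Algebra.smul_def] at hab hcd
    -- key quadratic identity for β = u * w⁻¹
    have key : ι b * u ^ 2 + (ι a - ι e * ι d) * (u * w) - (ι e * ι c) * w ^ 2 = 0 := by
      rw [← hab, ← hcd, ← he] at h
      linear_combination h
    by_cases hzero : b = 0 ∧ a - e * d = 0 ∧ -(e * c) = 0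
    · obtain ⟨hb, had, hec⟩ := hzero
      have hcz : c = 0 := by
        have : e * c = 0 := neg_eq_zero.mp hec
        rcases mul_eq_zero.mp this with h' | h'
        · exact absurd h' he0
        · exact h'
      -- v = ι a * w, x = ι d * u
      have hveq : v = ι a * w := by
        rw [← hab, hb, map_zero, zero_mul, add_zero]
      have hxeq : x = ι d * u := by
        rw [← hcd, hcz, map_zero, zero_mul, zero_add]
      have hd0 : d ≠ 0 := by
        intro h0; apply hx0; rw [hxeq, h0, map_zero, zero_mul]
      have ha0' : a ≠ 0 := by
        intro h0; apply hv0; rw [hveq, h0, map_zero, zero_mul]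
      constructor
      · refine ⟨d⁻¹, ?_⟩
        rw [map_inv₀, hxeq]
        have hιd : ι d ≠ 0 := fun h0 => hd0 ((_root_.map_eq_zero ι).mp h0)
        field_simp
      · refine ⟨a, ?_⟩
        rw [hveq]
        field_simp
    · exfalso
      apply hcase
      have hquad : ι b * (u * w⁻¹) ^ 2 + ι (a - e * d) * (u * w⁻¹) + ι (-(e * c)) = 0 := by
        rw [map_neg, map_sub, map_mul, map_mul]
        field_simp
        linear_combination key
      exact quad_mem_range p (u * w⁻¹) b (a - e * d) (-(e * c)) hzero hquad
end

section
/- For every prime p, there exists a finite set S of integers with |S| = p + 1 such that S is Sidon modulo p² + p + 1. -/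
open Polynomial Module

/-- `A` is Sidon modulo `M`: if `M ∣ (a + b) - (c + d)` with `a, b, c, d ∈ A`,
then `{a, b} = {c, d}` as unordered pairs. -/
def IsSidonMod (M : ℤ) (A : Finset ℤ) : Prop :=
  ∀ a ∈ A, ∀ b ∈ A, ∀ c ∈ A, ∀ d ∈ A,
    M ∣ (a + b) - (c + d) → (a = c ∧ b = d) ∨ (a = d ∧ b = c)

/-- Elements fixed by the Frobenius `x ↦ x^p` lie in the prime field. -/
lemma singer_aux_field (p : ℕ) [Fact p.Prime] (c : GaloisField p 3) (hc : c ^ p = c) :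
    ∃ k : ZMod p, algebraMap (ZMod p) (GaloisField p 3) k = c := by
  classical
  haveI : Fintype (GaloisField p 3) := Fintype.ofFinite _
  have hp1 : 1 < p := (Fact.out : p.Prime).one_lt
  set P : Polynomial (GaloisField p 3) := X ^ p - X with hP
  have hPdeg : P.natDegree = p := by
    rw [hP]
    rw [natDegree_sub_eq_left_of_natDegree_lt (by simp [natDegree_X_pow]; omega)]
    simp
  have hPne : P ≠ 0 := by
    intro h
    rw [h] at hPdeg
    simp at hPdeg
    omega
  set T : Finset (GaloisField p 3) := Finset.univ.image (algebraMap (ZMod p) (GaloisField p 3)) with hT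
  have hTcard : T.card = p := by
    rw [hT, Finset.card_image_of_injective _ (algebraMap (ZMod p) (GaloisField p 3)).injective,
      Finset.card_univ, ZMod.card]
  have hroot : ∀ z : GaloisField p 3, z ^ p = z → z ∈ P.roots.toFinset := by
    intro z hz
    rw [Multiset.mem_toFinset, mem_roots hPne]
    simp [hP, IsRoot, hz]
  have hsub : T ⊆ P.roots.toFinset := by
    intro z hz
    rw [hT, Finset.mem_image] at hz
    obtain ⟨k, -, rfl⟩ := hz
    exact hroot _ (by rw [← map_pow, ZMod.pow_card])
  have hTeq : T = P.roots.toFinset := by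
    apply Finset.eq_of_subset_of_card_le hsub
    calc P.roots.toFinset.card ≤ Multiset.card P.roots := Multiset.toFinset_card_le _
    _ ≤ P.natDegree := P.card_roots'
    _ = p := hPdeg
    _ = T.card := hTcard.symm
  have : c ∈ T := by rw [hTeq]; exact hroot c hc
  rw [hT, Finset.mem_image] at this
  obtain ⟨k, -, hk⟩ := this
  exact ⟨k, hk⟩

/-- Powers `g^(M t)` of a generator land in the prime field. -/
lemma singer_aux_scalar (p M : ℕ) [Fact p.Prime] (g : (GaloisField p 3)ˣ)
    (hord : orderOf g = M * (p - 1)) (t : ℤ) :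
    ∃ k : ZMod p, k ≠ 0 ∧
      ((g ^ ((M : ℤ) * t) : (GaloisField p 3)ˣ) : GaloisField p 3)
        = algebraMap (ZMod p) (GaloisField p 3) k := by
  have hp1 : 1 < p := (Fact.out : p.Prime).one_lt
  set c : (GaloisField p 3)ˣ := g ^ ((M : ℤ) * t) with hcdef
  have hc1 : c ^ (p - 1) = 1 := by
    rw [hcdef, ← zpow_natCast, ← zpow_mul]
    have : (M : ℤ) * t * (p - 1 : ℕ) = ((M * (p - 1) : ℕ) : ℤ) * t := by push_cast; ring
    rw [this, zpow_mul, zpow_natCast, ← hord, pow_orderOf_eq_one, one_zpow]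
  have hcF : ((c : GaloisField p 3)) ^ p = (c : GaloisField p 3) := by
    have h1 : ((c : GaloisField p 3)) ^ (p - 1) = 1 := by
      rw [← Units.val_pow_eq_pow_val, hc1, Units.val_one]
    calc (c : GaloisField p 3) ^ p = (c : GaloisField p 3) ^ (p - 1) * c := by
          rw [← pow_succ]; congr 1; omega
    _ = c := by rw [h1, one_mul]
  obtain ⟨k, hk⟩ := singer_aux_field p _ hcF
  refine ⟨k, ?_, hk.symm⟩
  intro h0
  rw [h0, map_zero] at hk
  exact c.ne_zero hk.symm

/-- If `g^i` and `g^k` agree up to a prime-field scalar, then `i ≡ k` mod `M`;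
with both below `M` they are equal. -/
lemma singer_aux_exp (p M : ℕ) [Fact p.Prime] (g : (GaloisField p 3)ˣ)
    (hord : orderOf g = M * (p - 1)) (i k : ℕ) (hi : i < M) (hk : k < M)
    (μ : ZMod p) (hμ : μ ≠ 0)
    (h : ((g : GaloisField p 3)) ^ i
        = algebraMap (ZMod p) (GaloisField p 3) μ * ((g : GaloisField p 3)) ^ k) :
    i = k := by
  have hp1 : 1 < p := (Fact.out : p.Prime).one_lt
  have h2 : ((g : GaloisField p 3) ^ i) ^ (p - 1) = ((g : GaloisField p 3) ^ k) ^ (p - 1) := by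
    rw [h, mul_pow, ← map_pow, ZMod.pow_card_sub_one_eq_one hμ, map_one, one_mul]
  have h3 : g ^ (i * (p - 1)) = g ^ (k * (p - 1)) := by
    apply Units.ext
    rw [Units.val_pow_eq_pow_val, Units.val_pow_eq_pow_val, pow_mul, pow_mul]
    exact h2
  have h4 : i * (p - 1) ≡ k * (p - 1) [MOD M * (p - 1)] := by
    rw [← hord]; exact pow_eq_pow_iff_modEq.mp h3
  have h5 := h4.dvd
  push_cast at h5
  have hc : ((p - 1 : ℕ) : ℤ) ≠ 0 := by
    have h1 : p - 1 ≠ 0 := by omega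
    exact_mod_cast h1
  have h6 : (M : ℤ) ∣ (k : ℤ) - i := by
    refine (mul_dvd_mul_iff_right hc).mp ?_
    rw [sub_mul]; exact h5
  have h7 : (k : ℤ) - i = 0 := by
    refine Int.eq_zero_of_abs_lt_dvd h6 (abs_lt.mpr ⟨?_, ?_⟩)
    · have : (i : ℤ) < M := by exact_mod_cast hi
      omega
    · have : (k : ℤ) < M := by exact_mod_cast hk
      omega
  omega

/-- Key lemma: in a `≤ 2`-dimensional `ZMod p`-subspace `W` of `GF(p³)`, if
`w₁ w₂ = c w₃ w₄` with all `wᵢ ∈ W \ {0}` and `c` a nonzero prime-field scalar,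
then `w₁` is proportional (over the prime field) to `w₃` or to `w₄`. -/
lemma singer_aux_key (p : ℕ) [Fact p.Prime] (W : Submodule (ZMod p) (GaloisField p 3))
    (hWr : Module.finrank (ZMod p) W ≤ 2)
    (w₁ w₂ w₃ w₄ : GaloisField p 3)
    (h₁ : w₁ ∈ W) (h₂ : w₂ ∈ W) (h₃ : w₃ ∈ W) (h₄ : w₄ ∈ W)
    (hn₁ : w₁ ≠ 0) (hn₂ : w₂ ≠ 0) (hn₄ : w₄ ≠ 0)
    (k : ZMod p) (hk : k ≠ 0)
    (heq : w₁ * w₂ = algebraMap (ZMod p) (GaloisField p 3) k * (w₃ * w₄)) :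
    (∃ μ : ZMod p, μ ≠ 0 ∧ w₁ = algebraMap (ZMod p) (GaloisField p 3) μ * w₃) ∨
    (∃ μ : ZMod p, μ ≠ 0 ∧ w₁ = algebraMap (ZMod p) (GaloisField p 3) μ * w₄) := by
  classical
  by_cases hc : ∃ μ : ZMod p, w₂ = algebraMap (ZMod p) (GaloisField p 3) μ * w₄
  · -- w₂ ∼ w₄, hence w₁ ∼ w₃
    obtain ⟨μ, hμ⟩ := hc
    have hμ0 : μ ≠ 0 := by
      intro h0; rw [h0, map_zero, zero_mul] at hμ; exact hn₂ hμ
    have halgμ : algebraMap (ZMod p) (GaloisField p 3) μ ≠ 0 := by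
      simpa using (map_ne_zero_iff _ (algebraMap (ZMod p) (GaloisField p 3)).injective).mpr hμ0
    left
    refine ⟨k * μ⁻¹, by simp [hk, hμ0], ?_⟩
    have hcancel : w₁ * (algebraMap (ZMod p) (GaloisField p 3) μ * w₄)
        = algebraMap (ZMod p) (GaloisField p 3) k * (w₃ * w₄) := by rw [← hμ]; exact heq
    have h5 : w₁ * algebraMap (ZMod p) (GaloisField p 3) μ
        = algebraMap (ZMod p) (GaloisField p 3) k * w₃ :=
      mul_right_cancel₀ hn₄ (by linear_combination hcancel)
    rw [map_mul, map_inv₀]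
    field_simp
    linear_combination h5
  · -- w₂, w₄ independent: β = w₁/w₄ is fixed-field, w₁ ∼ w₄
    push_neg at hc
    have hind : LinearIndependent (ZMod p) ![w₂, w₄] := by
      rw [LinearIndependent.pair_iff]
      intro s t hst
      by_cases hs : s = 0
      · subst hs
        simp only [zero_smul, zero_add] at hst
        rcases smul_eq_zero.mp hst with h | h
        · exact ⟨rfl, h⟩
        · exact absurd h hn₄
      · exfalso
        apply hc (-(s⁻¹ * t))
        have h' := congrArg (fun z => s⁻¹ • z) hst
        simp only [smul_add, smul_smul, inv_mul_cancel₀ hs, one_smul, smul_zero] at h'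
        have h2 : w₂ = -((s⁻¹ * t) • w₄) := eq_neg_of_add_eq_zero_left h'
        rw [h2, ← neg_smul, Algebra.smul_def]
    have hsp : Submodule.span (ZMod p) {w₂, w₄} = W := by
      apply Submodule.eq_of_le_of_finrank_le
      · rw [Submodule.span_le]
        intro z hz
        rcases hz with rfl | hz
        · exact h₂
        · rw [Set.mem_singleton_iff] at hz; subst hz; exact h₄
      · have hr : Set.range ![w₂, w₄] = {w₂, w₄} :=
          Matrix.range_cons_cons_empty w₂ w₄ _
        have h2 := finrank_span_eq_card hind
        rw [hr] at h2
        rw [h2]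
        simpa using hWr
    set β : GaloisField p 3 := w₁ / w₄ with hβdef
    have hβ0 : β ≠ 0 := div_ne_zero hn₁ hn₄
    have hβ4 : β * w₄ = w₁ := div_mul_cancel₀ w₁ hn₄
    have hβ2 : β * w₂ = algebraMap (ZMod p) (GaloisField p 3) k * w₃ := by
      rw [hβdef]
      rw [div_mul_eq_mul_div, div_eq_iff hn₄]
      linear_combination heq
    have hWcl : ∀ w ∈ W, β * w ∈ W := by
      intro w hw
      rw [← hsp] at hw
      obtain ⟨a, b, hab⟩ := Submodule.mem_span_pair.mp hw
      have hrw : β * w = a • (algebraMap (ZMod p) (GaloisField p 3) k * w₃) + b • w₁ := by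
        rw [← hβ2, ← hβ4, ← hab]
        simp only [mul_add, mul_smul_comm]
      rw [hrw]
      exact W.add_mem
        (W.smul_mem a (by rw [← Algebra.smul_def]; exact W.smul_mem k h₃))
        (W.smul_mem b h₁)
    have hdep : ¬ LinearIndependent (ZMod p) ![w₄, β * w₄, β * (β * w₄)] := by
      intro hLI
      have h3 := finrank_span_eq_card hLI
      have hr : Set.range ![w₄, β * w₄, β * (β * w₄)] = {w₄, β * w₄, β * (β * w₄)} := by
        rw [Matrix.range_cons, Matrix.range_cons_cons_empty, Set.singleton_union]
      rw [hr] at h3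
      have hle : Submodule.span (ZMod p) {w₄, β * w₄, β * (β * w₄)} ≤ W := by
        rw [Submodule.span_le]
        intro z hz
        simp only [Set.mem_insert_iff, Set.mem_singleton_iff] at hz
        rcases hz with rfl | rfl | rfl
        · exact h₄
        · exact hWcl _ h₄
        · exact hWcl _ (hWcl _ h₄)
      have hmono := Submodule.finrank_mono hle
      rw [h3] at hmono
      simp only [Fintype.card_fin] at hmono
      omega
    obtain ⟨a, hsum, i0, hi0⟩ := Fintype.not_linearIndependent_iff.mp hdep
    rw [Fin.sum_univ_three] at hsum
    simp only [Matrix.cons_val_zero, Matrix.cons_val_one, Matrix.head_cons,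
      Matrix.cons_val_two, Matrix.tail_cons] at hsum
    have hγ0 : algebraMap (ZMod p) (GaloisField p 3) (a 0)
        + algebraMap (ZMod p) (GaloisField p 3) (a 1) * β
        + algebraMap (ZMod p) (GaloisField p 3) (a 2) * β ^ 2 = 0 := by
      have hγ : (algebraMap (ZMod p) (GaloisField p 3) (a 0)
          + algebraMap (ZMod p) (GaloisField p 3) (a 1) * β
          + algebraMap (ZMod p) (GaloisField p 3) (a 2) * β ^ 2) * w₄ = 0 := by
        simp only [Algebra.smul_def] at hsum
        linear_combination hsum
      rcases mul_eq_zero.mp hγ with h | h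
      · exact h
      · exact absurd h hn₄
    set q : Polynomial (ZMod p) := C (a 0) + C (a 1) * X + C (a 2) * X ^ 2 with hq
    have haev : Polynomial.aeval β q = 0 := by
      rw [hq]
      simp only [map_add, map_mul, map_pow, aeval_C, aeval_X]
      exact hγ0
    have hqne : q ≠ 0 := by
      intro h0
      have hcoeff : ∀ m, q.coeff m = 0 := by rw [h0]; simp
      have e0 := hcoeff 0
      have e1 := hcoeff 1
      have e2 := hcoeff 2
      simp [hq, coeff_add, coeff_C, coeff_C_mul, coeff_X, coeff_X_pow] at e0 e1 e2
      fin_cases i0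
      · exact hi0 e0
      · exact hi0 e1
      · exact hi0 e2
    have hβint : IsIntegral (ZMod p) β := IsIntegral.of_finite (ZMod p) β
    have hmd : (minpoly (ZMod p) β).natDegree ≤ 2 := by
      have h1 := Polynomial.natDegree_le_of_dvd (minpoly.dvd (ZMod p) β haev) hqne
      have h2 : q.natDegree ≤ 2 := by rw [hq]; compute_degree
      omega
    have hdvd3 : (minpoly (ZMod p) β).natDegree ∣ 3 := by
      have hadj := IntermediateField.adjoin.finrank hβint
      have ht := Module.finrank_mul_finrank (ZMod p)
        (IntermediateField.adjoin (ZMod p) {β}) (GaloisField p 3)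
      rw [GaloisField.finrank p (by norm_num)] at ht
      exact ⟨_, by rw [← hadj]; exact ht.symm⟩
    have hone : (minpoly (ZMod p) β).natDegree = 1 := by
      rcases Nat.prime_three.eq_one_or_self_of_dvd _ hdvd3 with h | h
      · exact h
      · omega
    obtain ⟨μ, hμ⟩ := minpoly.natDegree_eq_one_iff.mp hone
    right
    have hμ0 : μ ≠ 0 := by rintro rfl; rw [map_zero] at hμ; exact hβ0 hμ.symm
    refine ⟨μ, hμ0, ?_⟩
    rw [hμ]
    exact hβ4.symm

/-- Singer's theorem (prime case): for every prime `p` there is a set of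
`p + 1` integers that is Sidon modulo `p² + p + 1`. -/
theorem singer_sidon_set (p : ℕ) (hp : p.Prime) :
    ∃ S : Finset ℤ, IsSidonMod ((p : ℤ) ^ 2 + p + 1) S ∧ S.card = p + 1 := by
  classical
  haveI : Fact p.Prime := ⟨hp⟩
  haveI : Fintype (GaloisField p 3) := Fintype.ofFinite _
  have hp2 := hp.two_le
  set M : ℕ := p ^ 2 + p + 1 with hMdef
  obtain ⟨g, hg⟩ := IsCyclic.exists_generator (α := (GaloisField p 3)ˣ)
  have hcardF : Fintype.card (GaloisField p 3) = p ^ 3 := by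
    rw [← Nat.card_eq_fintype_card]; exact GaloisField.card (p := p) (n := 3) (by norm_num)
  have hcardU : Nat.card (GaloisField p 3)ˣ = M * (p - 1) := by
    rw [Nat.card_eq_fintype_card, Fintype.card_units, hcardF, hMdef]
    have h1 : 1 ≤ p := by omega
    have h3 : 1 ≤ p ^ 3 := Nat.one_le_pow _ _ (by omega)
    zify [h1, h3]
    ring
  have hord : orderOf g = M * (p - 1) := by
    rw [orderOf_eq_card_of_forall_mem_zpowers hg, hcardU]
  -- an element outside the prime field
  have hxex : ∃ x : GaloisField p 3,
      ∀ a : ZMod p, algebraMap (ZMod p) (GaloisField p 3) a ≠ x := by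
    by_contra hcon
    push_neg at hcon
    have hsurj : Function.Surjective (algebraMap (ZMod p) (GaloisField p 3)) :=
      fun x => hcon x
    have hle := Fintype.card_le_of_surjective _ hsurj
    rw [ZMod.card, hcardF] at hle
    have h13 : p ^ 1 < p ^ 3 := Nat.pow_lt_pow_right hp.one_lt (by norm_num)
    simp only [pow_one] at h13
    omega
  obtain ⟨x, hx⟩ := hxex
  set W := Submodule.span (ZMod p) {(1 : GaloisField p 3), x} with hWdef
  have hind : LinearIndependent (ZMod p) ![(1 : GaloisField p 3), x] := by
    rw [LinearIndependent.pair_iff]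
    intro s t hst
    by_cases ht : t = 0
    · subst ht
      simp only [zero_smul, add_zero] at hst
      rcases smul_eq_zero.mp hst with h | h
      · exact ⟨h, rfl⟩
      · exact absurd h one_ne_zero
    · exfalso
      apply hx (-(t⁻¹ * s))
      have h' := congrArg (fun z => t⁻¹ • z) hst
      simp only [smul_add, smul_smul, inv_mul_cancel₀ ht, one_smul, smul_zero] at h'
      have h2 : x = -((t⁻¹ * s) • (1 : GaloisField p 3)) := eq_neg_of_add_eq_zero_right h'
      rw [h2, ← neg_smul, ← Algebra.algebraMap_eq_smul_one]
  have hWr : Module.finrank (ZMod p) W = 2 := by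
    have h2 := finrank_span_eq_card hind
    rw [Matrix.range_cons_cons_empty] at h2
    rw [hWdef, h2, Fintype.card_fin]
  have hWs : ∀ (k : ZMod p) (w : GaloisField p 3), w ∈ W →
      algebraMap (ZMod p) (GaloisField p 3) k * w ∈ W := by
    intro k w hw
    rw [← Algebra.smul_def]; exact W.smul_mem k hw
  have hshift : ∀ r t : ℕ,
      ((g : GaloisField p 3) ^ (r + M * t) ∈ W ↔ (g : GaloisField p 3) ^ r ∈ W) := by
    intro r t
    obtain ⟨k, hk0, hkc⟩ := singer_aux_scalar p M g hord (t : ℤ)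
    have hMt : ((g ^ ((M : ℤ) * (t : ℤ)) : (GaloisField p 3)ˣ) : GaloisField p 3)
        = (g : GaloisField p 3) ^ (M * t) := by
      have hcast : ((M : ℤ) * (t : ℤ)) = ((M * t : ℕ) : ℤ) := by push_cast; ring
      rw [hcast, zpow_natCast, Units.val_pow_eq_pow_val]
    have hpow : (g : GaloisField p 3) ^ (r + M * t)
        = algebraMap (ZMod p) (GaloisField p 3) k * (g : GaloisField p 3) ^ r := by
      rw [pow_add, ← hMt, hkc]; ring
    rw [hpow]
    constructor
    · intro h
      have h2 := hWs k⁻¹ _ h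
      rwa [← mul_assoc, ← map_mul, inv_mul_cancel₀ hk0, map_one, one_mul] at h2
    · exact hWs k _
  set S₀ : Finset ℕ := (Finset.range M).filter
    (fun i => (g : GaloisField p 3) ^ i ∈ W) with hS₀
  have hMpos : 0 < M := by positivity
  have hNpos : 0 < M * (p - 1) := Nat.mul_pos hMpos (by omega)
  set E : Finset ℕ := (Finset.range (M * (p - 1))).filter
    (fun m => (g : GaloisField p 3) ^ m ∈ W) with hE
  have hinjpow : ∀ m < M * (p - 1), ∀ m' < M * (p - 1),
      (g : GaloisField p 3) ^ m = (g : GaloisField p 3) ^ m' → m = m' := by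
    intro m hm m' hm' hgm
    have hu : g ^ m = g ^ m' := Units.ext
      (by rw [Units.val_pow_eq_pow_val, Units.val_pow_eq_pow_val]; exact hgm)
    exact pow_injOn_Iio_orderOf (by rwa [Set.mem_Iio, hord]) (by rwa [Set.mem_Iio, hord]) hu
  have hEcard : E.card = p ^ 2 - 1 := by
    have hbij : E.card
        = ((Finset.univ.filter (fun w : GaloisField p 3 => w ∈ W)).erase 0).card := by
      apply Finset.card_bij (fun m _ => (g : GaloisField p 3) ^ m)
      · intro m hm
        rw [hE, Finset.mem_filter, Finset.mem_range] at hm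
        exact Finset.mem_erase.mpr ⟨pow_ne_zero _ g.ne_zero,
          Finset.mem_filter.mpr ⟨Finset.mem_univ _, hm.2⟩⟩
      · intro m hm m' hm' h
        rw [hE, Finset.mem_filter, Finset.mem_range] at hm hm'
        exact hinjpow m hm.1 m' hm'.1 h
      · intro w hw
        rw [Finset.mem_erase, Finset.mem_filter] at hw
        obtain ⟨n, hn⟩ := mem_powers_iff_mem_zpowers.mpr (hg (Units.mk0 w hw.1))
        have hval : (g : GaloisField p 3) ^ (n % (M * (p - 1))) = w := by
          have h2 : g ^ (n % (M * (p - 1))) = Units.mk0 w hw.1 := by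
            rw [← hn, ← hord, pow_mod_orderOf]
          simpa [Units.val_pow_eq_pow_val] using congrArg Units.val h2
        exact ⟨n % (M * (p - 1)),
          by rw [hE, Finset.mem_filter, Finset.mem_range]
             exact ⟨Nat.mod_lt _ hNpos, by rw [hval]; exact hw.2.2⟩, hval⟩
    rw [hbij, Finset.card_erase_of_mem
      (by rw [Finset.mem_filter]; exact ⟨Finset.mem_univ _, W.zero_mem⟩)]
    have h1 : Fintype.card W = p ^ 2 := by
      rw [card_eq_pow_finrank (K := ZMod p) (V := W), ZMod.card, hWr]
    have hWcard : (Finset.univ.filter (fun w : GaloisField p 3 => w ∈ W)).card = p ^ 2 := by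
      calc (Finset.univ.filter (fun w : GaloisField p 3 => w ∈ W)).card
          = Fintype.card {w : GaloisField p 3 // w ∈ W} := (Fintype.card_subtype _).symm
        _ = Fintype.card W := Fintype.card_congr (Equiv.refl _)
        _ = p ^ 2 := h1
    rw [hWcard]
  have hprod : E.card = S₀.card * (p - 1) := by
    have hcb := Finset.card_bij' (s := E) (t := S₀ ×ˢ Finset.range (p - 1))
      (i := fun m _ => (m % M, m / M)) (j := fun pr _ => pr.1 + M * pr.2)
      ?_ ?_ ?_ ?_
    · rw [hcb, Finset.card_product, Finset.card_range]
    · intro m hm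
      rw [hE, Finset.mem_filter, Finset.mem_range] at hm
      rw [Finset.mem_product]
      constructor
      · rw [hS₀, Finset.mem_filter, Finset.mem_range]
        refine ⟨Nat.mod_lt _ hMpos, ?_⟩
        exact (hshift (m % M) (m / M)).mp (by rw [Nat.mod_add_div]; exact hm.2)
      · rw [Finset.mem_range, Nat.div_lt_iff_lt_mul hMpos, mul_comm (p-1) M]
        exact hm.1
    · intro pr hpr
      simp only [Finset.mem_product, hS₀, Finset.mem_filter, Finset.mem_range] at hpr
      simp only [hE, Finset.mem_filter, Finset.mem_range]
      constructor
      · have h0 : pr.1 < M := hpr.1.1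
        have h1 : pr.2 + 1 ≤ p - 1 := hpr.2
        have h2 : M * (pr.2 + 1) ≤ M * (p - 1) := Nat.mul_le_mul_left M h1
        have h3 : M * (pr.2 + 1) = M * pr.2 + M := by ring
        omega
      · exact (hshift pr.1 pr.2).mpr hpr.1.2
    · intro m hm
      exact Nat.mod_add_div m M
    · intro pr hpr
      simp only [Finset.mem_product, hS₀, Finset.mem_filter, Finset.mem_range] at hpr
      have h1 : (pr.1 + M * pr.2) % M = pr.1 := by
        rw [Nat.add_mul_mod_self_left, Nat.mod_eq_of_lt hpr.1.1]
      have h2 : (pr.1 + M * pr.2) / M = pr.2 := by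
        rw [Nat.add_mul_div_left _ _ hMpos, Nat.div_eq_of_lt hpr.1.1, zero_add]
      show ((pr.1 + M * pr.2) % M, (pr.1 + M * pr.2) / M) = pr
      rw [h1, h2]
  have hfac : (p + 1) * (p - 1) = p ^ 2 - 1 := by
    have h1 : 1 ≤ p := by omega
    have h2 : 1 ≤ p ^ 2 := Nat.one_le_pow _ _ (by omega)
    zify [h1, h2]
    ring
  have hS₀card : S₀.card = p + 1 := by
    have h1 : S₀.card * (p - 1) = (p + 1) * (p - 1) := by rw [← hprod, hEcard, hfac]
    exact Nat.eq_of_mul_eq_mul_right (by omega) h1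
  have hMz : (M : ℤ) = (p : ℤ) ^ 2 + p + 1 := by rw [hMdef]; push_cast; ring
  have hgne : ∀ n : ℕ, (g : GaloisField p 3) ^ n ≠ 0 := fun n => pow_ne_zero n g.ne_zero
  refine ⟨S₀.image (fun n : ℕ => (n : ℤ)), ?_, ?_⟩
  · intro a ha b hb c hc d hd hdvd
    obtain ⟨i, hiS, rfl⟩ := Finset.mem_image.mp ha
    obtain ⟨j, hjS, rfl⟩ := Finset.mem_image.mp hb
    obtain ⟨k, hkS, rfl⟩ := Finset.mem_image.mp hc
    obtain ⟨l, hlS, rfl⟩ := Finset.mem_image.mp hd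
    simp only [hS₀, Finset.mem_filter, Finset.mem_range] at hiS hjS hkS hlS
    rw [← hMz] at hdvd
    obtain ⟨t, ht⟩ := hdvd
    have hueq : g ^ ((i : ℤ) + j) = g ^ (((k : ℤ) + l) + (M : ℤ) * t) := by
      congr 1
      linarith [ht]
    obtain ⟨κ, hκ0, hκ⟩ := singer_aux_scalar p M g hord t
    have hFeq : (g : GaloisField p 3) ^ i * (g : GaloisField p 3) ^ j
        = algebraMap (ZMod p) (GaloisField p 3) κ
          * ((g : GaloisField p 3) ^ k * (g : GaloisField p 3) ^ l) := by
      have h2 := congrArg Units.val hueq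
      simp only [zpow_add, zpow_natCast, Units.val_mul, Units.val_pow_eq_pow_val, hκ] at h2
      linear_combination h2
    have hkey := singer_aux_key p W (le_of_eq hWr) _ _ _ _
      hiS.2 hjS.2 hkS.2 hlS.2 (hgne i) (hgne j) (hgne l) κ hκ0 hFeq
    rcases hkey with ⟨μ, hμ0, hμ⟩ | ⟨μ, hμ0, hμ⟩
    · -- g^i ∼ g^k : i = k and j = l
      have halgμ : algebraMap (ZMod p) (GaloisField p 3) μ ≠ 0 := by
        simpa using (map_ne_zero_iff _ (algebraMap (ZMod p) (GaloisField p 3)).injective).mpr hμ0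
      have hik : i = k := singer_aux_exp p M g hord i k hiS.1 hkS.1 μ hμ0 hμ
      have hjl : j = l := by
        apply singer_aux_exp p M g hord j l hjS.1 hlS.1 (μ⁻¹ * κ)
          (mul_ne_zero (inv_ne_zero hμ0) hκ0)
        have h3 : (g : GaloisField p 3) ^ k
            * (algebraMap (ZMod p) (GaloisField p 3) μ * (g : GaloisField p 3) ^ j)
            = (g : GaloisField p 3) ^ k
            * (algebraMap (ZMod p) (GaloisField p 3) κ * (g : GaloisField p 3) ^ l) := by
          rw [← hik] at hFeq hμ ⊢
          linear_combination hFeq - (g : GaloisField p 3) ^ j * hμ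
        have h4 := mul_left_cancel₀ (hgne k) h3
        have h5 : (g : GaloisField p 3) ^ j
            = (algebraMap (ZMod p) (GaloisField p 3) μ)⁻¹
              * (algebraMap (ZMod p) (GaloisField p 3) κ * (g : GaloisField p 3) ^ l) := by
          rw [← h4, inv_mul_cancel_left₀ halgμ]
        rw [h5, map_mul, map_inv₀]
        ring
      exact Or.inl ⟨by exact_mod_cast hik, by exact_mod_cast hjl⟩
    · -- g^i ∼ g^l : i = l and j = k
      have halgμ : algebraMap (ZMod p) (GaloisField p 3) μ ≠ 0 := by
        simpa using (map_ne_zero_iff _ (algebraMap (ZMod p) (GaloisField p 3)).injective).mpr hμ0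
      have hil : i = l := singer_aux_exp p M g hord i l hiS.1 hlS.1 μ hμ0 hμ
      have hjk : j = k := by
        apply singer_aux_exp p M g hord j k hjS.1 hkS.1 (μ⁻¹ * κ)
          (mul_ne_zero (inv_ne_zero hμ0) hκ0)
        have h3 : (g : GaloisField p 3) ^ l
            * (algebraMap (ZMod p) (GaloisField p 3) μ * (g : GaloisField p 3) ^ j)
            = (g : GaloisField p 3) ^ l
            * (algebraMap (ZMod p) (GaloisField p 3) κ * (g : GaloisField p 3) ^ k) := by
          rw [← hil] at hFeq hμ ⊢
          linear_combination hFeq - (g : GaloisField p 3) ^ j * hμ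
        have h4 := mul_left_cancel₀ (hgne l) h3
        have h5 : (g : GaloisField p 3) ^ j
            = (algebraMap (ZMod p) (GaloisField p 3) μ)⁻¹
              * (algebraMap (ZMod p) (GaloisField p 3) κ * (g : GaloisField p 3) ^ k) := by
          rw [← h4, inv_mul_cancel_left₀ halgμ]
        rw [h5, map_mul, map_inv₀]
        ring
      exact Or.inr ⟨by exact_mod_cast hil, by exact_mod_cast hjk⟩
  · exact (Finset.card_image_of_injective S₀ (fun a b h => by exact_mod_cast h)).trans hS₀card
end

section
/- Let M and N be integers with 0 < N ≤ M, and let S be a finite set of integers that is Sidon modulo M. Then there exists a finite Sidon set A ⊆ {1, …, N} with |A| ≥ ⌈|S|·N / M⌉. (Proof idea: for each offset u ∈ {0, …, M−1} the cyclic window of length N starting at u captures, summed over all u, exactly |S|·N memberships, so some window captures at least ⌈|S|·N/M⌉ elements, and the relabeled window is an interval Sidon set.) -/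
def IsSidon (A : Finset ℤ) : Prop :=
  ∀ a ∈ A, ∀ b ∈ A, ∀ c ∈ A, ∀ d ∈ A,
    a + b = c + d → (a = c ∧ b = d) ∨ (a = d ∧ b = c)

lemma aux_sub_emod (a b m : ℤ) : (a - b % m) % m = (a - b) % m :=
  Int.ModEq.sub (Int.ModEq.refl a) (Int.emod_emod_of_dvd b dvd_rfl)

lemma aux_modeq (x m : ℤ) : x % m ≡ x [ZMOD m] := Int.emod_emod_of_dvd x dvd_rfl

lemma aux_eq_of_dvd {a b m : ℤ} (h : m ∣ a - b) (h1 : 0 ≤ a) (h2 : a < m)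
    (h3 : 0 ≤ b) (h4 : b < m) : a = b := by
  have := Int.eq_zero_of_abs_lt_dvd h (by rw [abs_sub_lt_iff]; omega)
  omega

/-- Window averaging: from a set Sidon modulo `M` and a window length
`0 < N ≤ M`, one obtains an interval Sidon set in `{1, …, N}` of cardinality
at least `⌈|S| · N / M⌉`. -/
theorem exists_large_intervalSidon (M N : ℕ) (hN : 0 < N) (hNM : N ≤ M)
    (S : Finset ℤ) (hS : IsSidonMod (M : ℤ) S) :
    ∃ A : Finset ℤ, A ⊆ Finset.Icc (1 : ℤ) N ∧ IsSidon A ∧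
      (A.card : ℤ) ≥ ⌈(S.card * N : ℚ) / M⌉ := by
  have hM : 0 < M := lt_of_lt_of_le hN hNM
  set m : ℤ := (M : ℤ) with hm
  set n : ℤ := (N : ℤ) with hn
  have hm0 : 0 < m := by rw [hm]; exact_mod_cast hM
  have hn0 : 0 < n := by rw [hn]; exact_mod_cast hN
  have hnm : n ≤ m := by rw [hm, hn]; exact_mod_cast hNM
  -- residues
  set T : Finset ℤ := S.image (fun s => s % m) with hT
  have hinj : Set.InjOn (fun s => s % m) S := by
    intro x hx y hy hxy
    have hdvd : m ∣ (x + y) - (y + y) := by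
      have : m ∣ y - x := Int.ModEq.dvd (show x % m = y % m from hxy)
      have e : (x + y) - (y + y) = -(y - x) := by ring
      rw [e]; exact dvd_neg.2 this
    rcases hS x hx y hy y hy y hy hdvd with ⟨h1, _⟩ | ⟨h1, _⟩ <;> exact h1
  have hTcard : T.card = S.card := Finset.card_image_of_injOn hinj
  have hTmem : ∀ t ∈ T, 0 ≤ t ∧ t < m := by
    intro t ht
    rw [hT, Finset.mem_image] at ht
    obtain ⟨s, _, rfl⟩ := ht
    exact ⟨Int.emod_nonneg s hm0.ne', Int.emod_lt_of_pos s hm0⟩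
  have hTS : IsSidonMod m T := by
    intro a ha b hb c hc d hd hdvd
    rw [hT, Finset.mem_image] at ha hb hc hd
    obtain ⟨x, hx, rfl⟩ := ha
    obtain ⟨y, hy, rfl⟩ := hb
    obtain ⟨z, hz, rfl⟩ := hc
    obtain ⟨w, hw, rfl⟩ := hd
    have hdvd' : m ∣ (x + y) - (z + w) := by
      have h1 : (x % m + y % m) ≡ (x + y) [ZMOD m] :=
        (aux_modeq x m).add (aux_modeq y m)
      have h2 : (z % m + w % m) ≡ (z + w) [ZMOD m] :=
        (aux_modeq z m).add (aux_modeq w m)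
      have h3 : (x + y) ≡ (z + w) [ZMOD m] :=
        h1.symm.trans ((Int.modEq_iff_dvd.2 (by rwa [show (z % m + w % m) - (x % m + y % m) = -(((x % m + y % m)) - (z % m + w % m)) by ring, dvd_neg])).trans h2)
      exact Int.ModEq.dvd h3.symm
    rcases hS x hx y hy z hz w hw hdvd' with ⟨rfl, rfl⟩ | ⟨rfl, rfl⟩
    · exact Or.inl ⟨rfl, rfl⟩
    · exact Or.inr ⟨rfl, rfl⟩
  -- windows
  set A : ℕ → Finset ℤ := fun u =>
    (T.filter fun t => (t - (u : ℤ)) % m < n).image (fun t => (t - (u : ℤ)) % m + 1)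
    with hA
  have hwinj : ∀ u : ℕ, Set.InjOn (fun t => (t - (u : ℤ)) % m + 1)
      (T.filter fun t => (t - (u : ℤ)) % m < n) := by
    intro u t ht t' ht' htt'
    simp only [Finset.coe_filter, Set.mem_setOf_eq] at ht ht'
    have htt'' : (t - (u : ℤ)) % m + 1 = (t' - (u : ℤ)) % m + 1 := htt'
    have h1 : (t - (u : ℤ)) % m = (t' - (u : ℤ)) % m := by omega
    have h2 : m ∣ t - t' := by
      have := Int.ModEq.dvd (show (t - (u:ℤ)) % m = (t' - (u:ℤ)) % m from h1)
      rwa [show (t' - (u:ℤ)) - (t - (u:ℤ)) = t' - t by ring, ← dvd_neg,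
        show -(t' - t) = t - t' by ring] at this
    obtain ⟨ht1, ht2⟩ := hTmem t ht.1
    obtain ⟨ht1', ht2'⟩ := hTmem t' ht'.1
    exact aux_eq_of_dvd h2 ht1 ht2 ht1' ht2'
  have hAcard : ∀ u : ℕ, (A u).card = (T.filter fun t => (t - (u : ℤ)) % m < n).card :=
    fun u => Finset.card_image_of_injOn (hwinj u)
  -- counting per element
  have hcount : ∀ t ∈ T,
      ((Finset.range M).filter fun (u : ℕ) => (t - (u : ℤ)) % m < n).card = N := by
    intro t ht
    obtain ⟨ht1, ht2⟩ := hTmem t ht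
    rw [← Finset.card_range N]
    refine Finset.card_bij' (fun (u : ℕ) _ => ((t - (u : ℤ)) % m).toNat)
      (fun (v : ℕ) _ => ((t - (v : ℤ)) % m).toNat) ?_ ?_ ?_ ?_
    · intro u hu
      simp only [Finset.mem_filter, Finset.mem_range] at hu
      have h0 : 0 ≤ (t - (u : ℤ)) % m := Int.emod_nonneg _ hm0.ne'
      show ((t - (u : ℤ)) % m).toNat ∈ Finset.range N
      rw [Finset.mem_range]
      omega
    · intro v hv
      rw [Finset.mem_range] at hv
      have h0 : 0 ≤ (t - (v : ℤ)) % m := Int.emod_nonneg _ hm0.ne'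
      have h1 : (t - (v : ℤ)) % m < m := Int.emod_lt_of_pos _ hm0
      show ((t - (v : ℤ)) % m).toNat ∈
        (Finset.range M).filter fun (u : ℕ) => (t - (u : ℤ)) % m < n
      rw [Finset.mem_filter, Finset.mem_range]
      refine ⟨by omega, ?_⟩
      rw [Int.toNat_of_nonneg h0, aux_sub_emod,
        show t - (t - (v : ℤ)) = (v : ℤ) by ring,
        Int.emod_eq_of_lt (by positivity) (by omega)]
      omega
    · intro u hu
      simp only [Finset.mem_filter, Finset.mem_range] at hu
      have h0 : 0 ≤ (t - (u : ℤ)) % m := Int.emod_nonneg _ hm0.ne'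
      show ((t - ((((t - (u : ℤ)) % m).toNat : ℕ) : ℤ)) % m).toNat = u
      rw [Int.toNat_of_nonneg h0, aux_sub_emod,
        show t - (t - (u : ℤ)) = (u : ℤ) by ring,
        Int.emod_eq_of_lt (by positivity) (by rw [hm]; exact_mod_cast hu.1)]
      exact Int.toNat_natCast u
    · intro v hv
      rw [Finset.mem_range] at hv
      have h0 : 0 ≤ (t - (v : ℤ)) % m := Int.emod_nonneg _ hm0.ne'
      show ((t - ((((t - (v : ℤ)) % m).toNat : ℕ) : ℤ)) % m).toNat = v
      rw [Int.toNat_of_nonneg h0, aux_sub_emod,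
        show t - (t - (v : ℤ)) = (v : ℤ) by ring,
        Int.emod_eq_of_lt (by positivity) (by omega)]
      exact Int.toNat_natCast v
  -- total sum
  have hsum : ∑ u ∈ Finset.range M, (A u).card = S.card * N := by
    calc ∑ u ∈ Finset.range M, (A u).card
        = ∑ u ∈ Finset.range M, ∑ t ∈ T, if (t - (u : ℤ)) % m < n then 1 else 0 :=
          Finset.sum_congr rfl (fun u _ => by rw [hAcard, Finset.card_filter])
      _ = ∑ t ∈ T, ∑ u ∈ Finset.range M, if (t - (u : ℤ)) % m < n then 1 else 0 :=
          Finset.sum_comm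
      _ = ∑ t ∈ T, ((Finset.range M).filter fun (u : ℕ) => (t - (u : ℤ)) % m < n).card :=
          Finset.sum_congr rfl (fun t _ => (Finset.card_filter _ _).symm)
      _ = ∑ t ∈ T, N := Finset.sum_congr rfl hcount
      _ = S.card * N := by rw [Finset.sum_const, hTcard, smul_eq_mul]
  -- pigeonhole
  obtain ⟨u, hu, hle⟩ : ∃ u ∈ Finset.range M, S.card * N ≤ M * (A u).card := by
    apply Finset.exists_le_of_sum_le ⟨0, Finset.mem_range.2 hM⟩
    refine le_of_eq ?_
    calc ∑ _u ∈ Finset.range M, S.card * N = M * (S.card * N) := by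
          rw [Finset.sum_const, Finset.card_range, smul_eq_mul]
      _ = M * ∑ u ∈ Finset.range M, (A u).card := by rw [hsum]
      _ = ∑ u ∈ Finset.range M, M * (A u).card := Finset.mul_sum _ _ _
  refine ⟨A u, ?_, ?_, ?_⟩
  · intro a ha
    rw [hA, Finset.mem_image] at ha
    obtain ⟨t, ht, rfl⟩ := ha
    rw [Finset.mem_filter] at ht
    have h0 : 0 ≤ (t - (u : ℤ)) % m := Int.emod_nonneg _ hm0.ne'
    have ht2 : (t - (u : ℤ)) % m < n := ht.2
    simp only [Finset.mem_Icc]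
    constructor <;> omega
  · intro a ha b hb c hc d hd habcd
    simp only [hA, Finset.mem_image, Finset.mem_filter] at ha hb hc hd
    obtain ⟨x, ⟨hxT, _⟩, rfl⟩ := ha
    obtain ⟨y, ⟨hyT, _⟩, rfl⟩ := hb
    obtain ⟨z, ⟨hzT, _⟩, rfl⟩ := hc
    obtain ⟨w, ⟨hwT, _⟩, rfl⟩ := hd
    have hdvd : m ∣ (x + y) - (z + w) := by
      have habcd' : ((x - (u:ℤ)) % m + 1) + ((y - (u:ℤ)) % m + 1)
          = ((z - (u:ℤ)) % m + 1) + ((w - (u:ℤ)) % m + 1) := habcd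
      have h1 : ((x - (u:ℤ)) % m + (y - (u:ℤ)) % m) = ((z - (u:ℤ)) % m + (w - (u:ℤ)) % m) := by
        omega
      have h2 : ((x - (u:ℤ)) % m + (y - (u:ℤ)) % m) ≡ (x - u) + (y - u) [ZMOD m] :=
        (aux_modeq _ m).add (aux_modeq _ m)
      have h3 : ((z - (u:ℤ)) % m + (w - (u:ℤ)) % m) ≡ (z - u) + (w - u) [ZMOD m] :=
        (aux_modeq _ m).add (aux_modeq _ m)
      have h4 : (x - (u:ℤ)) + (y - u) ≡ (z - u) + (w - u) [ZMOD m] :=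
        h2.symm.trans (h1 ▸ h3)
      have := Int.ModEq.dvd h4
      rwa [show ((z - (u:ℤ)) + (w - u)) - ((x - u) + (y - u)) = -((x + y) - (z + w)) by ring,
        dvd_neg] at this
    rcases hTS x hxT y hyT z hzT w hwT hdvd with ⟨rfl, rfl⟩ | ⟨rfl, rfl⟩
    · exact Or.inl ⟨rfl, rfl⟩
    · exact Or.inr ⟨rfl, rfl⟩
  · rw [ge_iff_le, Int.ceil_le]
    push_cast
    rw [div_le_iff₀ (by exact_mod_cast hM : (0:ℚ) < (M:ℚ))]
    have : (S.card * N : ℚ) ≤ ((A u).card : ℚ) * M := by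
      rw [mul_comm ((A u).card : ℚ)]
      exact_mod_cast hle
    exact this
end

section
/- Let M be a positive integer and let S be a nonempty finite set of integers that is Sidon modulo M, with s = |S|. Let N be an integer with 0 < N ≤ M and N ≥ M − ⌊(M + s(s−1)/2) / s⌋ + 1, where the divisions are floor (natural-number) divisions. Then there exists a finite Sidon set A ⊆ {1, …, N} with |A| = s. (The cyclic gaps between consecutive residues of S modulo M are pairwise distinct positive integers summing to M, so the largest gap is at least ⌊(M + s(s−1)/2)/s⌋, and deleting a largest gap leaves a cyclic window of length at most N containing all of S.) -/
private lemma aux_two_mul_sum (B : Finset ℕ) : B.card * (B.card - 1) ≤ 2 * ∑ b ∈ B, b := by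
  induction B using Finset.strongInduction with
  | _ B ih =>
    rcases B.eq_empty_or_nonempty with rfl | hne
    · simp
    · have hmax := B.max'_mem hne
      have hsub : B ⊆ Finset.range (B.max' hne + 1) := by
        intro x hx
        rw [Finset.mem_range, Nat.lt_succ_iff]
        exact B.le_max' x hx
      have hcard : B.card ≤ B.max' hne + 1 := by
        simpa using Finset.card_le_card hsub
      have hih := ih (B.erase (B.max' hne)) (Finset.erase_ssubset hmax)
      have hce : (B.erase (B.max' hne)).card = B.card - 1 := Finset.card_erase_of_mem hmax
      have hsum : ∑ b ∈ B, b = B.max' hne + ∑ b ∈ B.erase (B.max' hne), b :=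
        (Finset.add_sum_erase _ _ hmax).symm
      rw [hce] at hih
      rw [hsum]
      have h1 : 1 ≤ B.card := Finset.card_pos.mpr hne
      set c := B.card
      set m := B.max' hne
      set se := ∑ b ∈ B.erase m, b
      clear_value c m se
      obtain ⟨k, hk⟩ : ∃ k, c = k + 1 := ⟨c - 1, by omega⟩
      subst hk
      simp only [Nat.add_sub_cancel] at hih ⊢
      rcases Nat.eq_zero_or_pos k with rfl | hk1
      · simp
      · obtain ⟨j, hj⟩ : ∃ j, k = j + 1 := ⟨k - 1, by omega⟩
        subst hj
        simp only [Nat.add_sub_cancel] at hih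
        nlinarith [hih, hcard]

private lemma aux_eq_of_dvd_s8 (m x y : ℤ) (hdvd : m ∣ x - y) (hx1 : 0 ≤ x) (hx2 : x < m)
    (hy1 : 0 ≤ y) (hy2 : y < m) : x = y := by
  by_contra hne
  have habs : m ≤ |x - y| :=
    Int.le_of_dvd (abs_pos.mpr (sub_ne_zero.mpr hne)) ((dvd_abs _ _).mpr hdvd)
  rcases abs_cases (x - y) with ⟨h, _⟩ | ⟨h, _⟩ <;> omega

private lemma aux_exists_big (B : Finset ℕ) (Mn : ℕ) (hne : B.Nonempty)
    (hsum : Mn ≤ ∑ b ∈ B, b) :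
    ∃ b ∈ B, (Mn + B.card * (B.card - 1) / 2) / B.card ≤ b := by
  refine ⟨B.max' hne, B.max'_mem hne, ?_⟩
  have hle : ∀ b ∈ B, b ≤ B.max' hne := fun b hb => B.le_max' b hb
  have hinj : ∀ a ∈ B, ∀ b ∈ B, B.max' hne - a = B.max' hne - b → a = b := by
    intro a ha b hb hab
    have := hle a ha; have := hle b hb; omega
  have hcard2 : (B.image (fun b => B.max' hne - b)).card = B.card :=
    Finset.card_image_of_injOn hinj
  have h1 := aux_two_mul_sum (B.image (fun b => B.max' hne - b))
  rw [hcard2, Finset.sum_image hinj] at h1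
  have hsplit : (∑ b ∈ B, (B.max' hne - b)) + ∑ b ∈ B, b = B.card * B.max' hne := by
    rw [← Finset.sum_add_distrib]
    rw [Finset.sum_congr rfl (fun b hb => Nat.sub_add_cancel (hle b hb))]
    simp [Finset.sum_const, mul_comm]
  set m := B.max' hne
  set s := B.card with hs
  have hspos : 0 < s := Finset.card_pos.mpr hne
  set X := ∑ b ∈ B, (m - b)
  set Y := ∑ b ∈ B, b
  set P := s * (s - 1) with hP
  set Q := s * m with hQ
  set G := (Mn + P / 2) / s with hGdef
  have A1 : s * G ≤ Mn + P / 2 := by rw [hGdef, mul_comm]; exact Nat.div_mul_le_self _ _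
  have key : s * G ≤ s * m := by
    set sG := s * G
    rw [← hQ] at *
    omega
  exact Nat.le_of_mul_le_mul_left key hspos

/-- Quantitative full transfer: if `S` is nonempty and Sidon modulo `M`,
`s = |S|`, and `0 < N ≤ M` with
`N ≥ M - (M + s*(s-1)/2)/s + 1` (floor divisions), then there is an interval
Sidon set `A ⊆ {1, …, N}` with `|A| = s`. -/
theorem exists_full_intervalSidon_of_gap_bound (M : ℕ) (hM : 0 < M)
    (S : Finset ℤ) (hSne : S.Nonempty) (hS : IsSidonMod (M : ℤ) S)
    (N : ℕ) (hN : 0 < N) (hNM : N ≤ M)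
    (hthr : N ≥ M - (M + S.card * (S.card - 1) / 2) / S.card + 1) :
    ∃ A : Finset ℤ, A ⊆ Finset.Icc (1 : ℤ) N ∧ IsSidon A ∧
      A.card = S.card := by
  classical
  set s := S.card with hs
  set G := (M + s * (s - 1) / 2) / s with hGdef
  have hMz : (0 : ℤ) < (M : ℤ) := by exact_mod_cast hM
  -- the case s = 1
  by_cases hs1 : s = 1
  · refine ⟨{1}, ?_, ?_, ?_⟩
    · intro a ha
      rw [Finset.mem_singleton] at ha
      subst ha
      rw [Finset.mem_Icc]
      constructor
      · norm_num
      · omega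
    · intro a ha b hb c hc d hd _
      rw [Finset.mem_singleton] at ha hb hc hd
      subst ha; subst hb; subst hc; subst hd
      exact Or.inl ⟨rfl, rfl⟩
    · simp [hs1]
  have hspos : 0 < s := Finset.card_pos.mpr hSne
  have hs2 : 2 ≤ s := by omega
  -- residues mod M
  set T : Finset ℤ := S.image (fun x => x % (M : ℤ)) with hT
  have hmem : ∀ x ∈ T, ∃ a ∈ S, a % (M : ℤ) = x := by
    intro x hx
    rw [hT, Finset.mem_image] at hx
    exact hx
  have hmodinj : ∀ a ∈ S, ∀ b ∈ S, a % (M : ℤ) = b % (M : ℤ) → a = b := by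
    intro a ha b hb hab
    have h1 : (M : ℤ) ∣ b - a := Int.ModEq.dvd hab
    have hdvd : (M : ℤ) ∣ (a + a) - (b + a) := by
      have e : (a + a) - (b + a) = -(b - a) := by ring
      rw [e]; exact dvd_neg.mpr h1
    rcases hS a ha a ha b hb a ha hdvd with ⟨h, _⟩ | ⟨_, h⟩
    · exact h
    · exact h
  have hTcard : T.card = s := Finset.card_image_of_injOn hmodinj
  have hbd : ∀ x ∈ T, 0 ≤ x ∧ x < (M : ℤ) := by
    intro x hx
    obtain ⟨a, _, rfl⟩ := hmem x hx
    exact ⟨Int.emod_nonneg _ (ne_of_gt hMz), Int.emod_lt_of_pos _ hMz⟩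
  have hmd0 : ∀ z : ℤ, (M : ℤ) ∣ z % (M : ℤ) - z := by
    intro z
    have h := Int.emod_add_mul_ediv z (M : ℤ)
    exact ⟨-(z / (M : ℤ)), by linear_combination h⟩
  have hTmod : IsSidonMod (M : ℤ) T := by
    intro a ha b hb c hc d hd hdvd
    obtain ⟨a', ha', rfl⟩ := hmem a ha
    obtain ⟨b', hb', rfl⟩ := hmem b hb
    obtain ⟨c', hc', rfl⟩ := hmem c hc
    obtain ⟨d', hd', rfl⟩ := hmem d hd
    have key : (M : ℤ) ∣ (a' + b') - (c' + d') := by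
      have h5 := dvd_sub (dvd_sub hdvd (dvd_add (hmd0 a') (hmd0 b'))) (dvd_neg.mpr (dvd_add (hmd0 c') (hmd0 d')))
      have e : (a' % (M:ℤ) + b' % (M:ℤ)) - (c' % (M:ℤ) + d' % (M:ℤ)) -
          ((a' % (M:ℤ) - a') + (b' % (M:ℤ) - b')) - -((c' % (M:ℤ) - c') + (d' % (M:ℤ) - d')) =
          (a' + b') - (c' + d') := by ring
      rwa [e] at h5
    rcases hS a' ha' b' hb' c' hc' d' hd' key with ⟨e1, e2⟩ | ⟨e1, e2⟩
    · exact Or.inl ⟨by rw [e1], by rw [e2]⟩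
    · exact Or.inr ⟨by rw [e1], by rw [e2]⟩
  have hTne : T.Nonempty := Finset.card_pos.mp (by omega)
  have herase : ∀ t : ℤ, (T.erase t).Nonempty := by
    intro t
    have h := Finset.pred_card_le_card_erase (s := T) (a := t)
    exact Finset.card_pos.mp (by omega)
  -- gap function
  set f : ℤ → ℤ → ℕ := fun t x => ((x - t) % (M : ℤ)).toNat with hfdef
  set g : ℤ → ℕ := fun t => ((T.erase t).image (f t)).min' ((herase t).image (f t)) with hgdef
  have hfval : ∀ t x : ℤ, ((f t x : ℤ)) = (x - t) % (M : ℤ) := by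
    intro t x
    simp only [hfdef]
    exact Int.toNat_of_nonneg (Int.emod_nonneg _ (ne_of_gt hMz))
  have hflt : ∀ t x : ℤ, f t x < M := by
    intro t x
    have h := Int.emod_lt_of_pos (x - t) hMz
    rw [← hfval] at h
    exact_mod_cast h
  have hfpos : ∀ t ∈ T, ∀ x ∈ T, x ≠ t → 1 ≤ f t x := by
    intro t ht x hx hne
    by_contra hcon
    have h0 : f t x = 0 := by omega
    have h1 : (x - t) % (M : ℤ) = 0 := by
      have h2 := hfval t x
      rw [h0] at h2
      simpa using h2.symm
    have hdvd := Int.dvd_of_emod_eq_zero h1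
    obtain ⟨hx1, hx2⟩ := hbd x hx
    obtain ⟨ht1, ht2⟩ := hbd t ht
    exact hne (sub_eq_zero.mp (by
      have := aux_eq_of_dvd_s8 (M : ℤ) x t hdvd hx1 hx2 ht1 ht2
      omega))
  have hgmem : ∀ t : ℤ, ∃ u ∈ T.erase t, g t = f t u := by
    intro t
    have h : g t ∈ (T.erase t).image (f t) := by
      simp only [hgdef]
      exact Finset.min'_mem _ _
    rw [Finset.mem_image] at h
    obtain ⟨u, hu, hu2⟩ := h
    exact ⟨u, hu, hu2.symm⟩
  have hgle : ∀ t x : ℤ, x ∈ T.erase t → g t ≤ f t x := by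
    intro t x hx
    simp only [hgdef]
    exact Finset.min'_le _ _ (Finset.mem_image_of_mem _ hx)
  -- distinctness of gaps
  have hginj : ∀ t ∈ T, ∀ t' ∈ T, g t = g t' → t = t' := by
    intro t ht t' ht' hgg
    obtain ⟨u, hu, hu2⟩ := hgmem t
    obtain ⟨u', hu', hu2'⟩ := hgmem t'
    have huT : u ∈ T := Finset.mem_of_mem_erase hu
    have hunt : u ≠ t := Finset.ne_of_mem_erase hu
    have hfe : f t u = f t' u' := by rw [← hu2, ← hu2', hgg]
    have he : (u - t) % (M : ℤ) = (u' - t') % (M : ℤ) := by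
      rw [← hfval, ← hfval, hfe]
    have h1 : (M : ℤ) ∣ (u' - t') - (u - t) := Int.ModEq.dvd he
    have hdvd : (M : ℤ) ∣ (u + t') - (u' + t) := by
      have e : (u + t') - (u' + t) = -((u' - t') - (u - t)) := by ring
      rw [e]; exact dvd_neg.mpr h1
    rcases hTmod u huT t' ht' u' (Finset.mem_of_mem_erase hu') t ht hdvd with ⟨e1, e2⟩ | ⟨e1, e2⟩
    · exact e2.symm
    · exact absurd e1 hunt
  -- covering: sum of gaps is at least M
  have hset : Finset.Ico (0 : ℤ) (M : ℤ) ⊆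
      T.biUnion (fun t => (Finset.range (g t)).image (fun i : ℕ => (t + (i : ℤ)) % (M : ℤ))) := by
    intro y hy
    rw [Finset.mem_Ico] at hy
    obtain ⟨t, htT, htmin⟩ := T.exists_min_image (fun t => f t y) hTne
    rw [Finset.mem_biUnion]
    refine ⟨t, htT, ?_⟩
    rw [Finset.mem_image]
    have hiv : ((f t y : ℤ)) = (y - t) % (M : ℤ) := hfval t y
    have hilt : f t y < g t := by
      by_contra hcon
      push_neg at hcon
      obtain ⟨u, hu, hu2⟩ := hgmem t
      have huT := Finset.mem_of_mem_erase hu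
      have hg1 : 1 ≤ g t := by
        rw [hu2]; exact hfpos t htT u huT (Finset.ne_of_mem_erase hu)
      have hiM : (f t y : ℤ) < (M : ℤ) := by
        rw [hiv]; exact Int.emod_lt_of_pos _ hMz
      have hyu : (y - u) % (M : ℤ) = (f t y : ℤ) - (g t : ℤ) := by
        have hfu := hfval t u
        have e1 : (y - u) % (M : ℤ) = ((y - t) % (M:ℤ) - (u - t) % (M:ℤ)) % (M:ℤ) := by
          conv_lhs => rw [show y - u = (y - t) - (u - t) by ring]
          rw [Int.sub_emod]
        rw [e1, ← hiv, ← hfu, hu2]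
        apply Int.emod_eq_of_lt
        · omega
        · omega
      have hmin := htmin u huT
      have htn : f u y = f t y - g t := by
        have : ((f u y : ℤ)) = (y - u) % (M : ℤ) := hfval u y
        rw [hyu] at this
        omega
      omega
    refine ⟨f t y, Finset.mem_range.mpr hilt, ?_⟩
    have e2 : (t + (f t y : ℤ)) % (M : ℤ) = (t + (y - t)) % (M : ℤ) := by
      conv_lhs => rw [Int.add_emod]
      conv_rhs => rw [Int.add_emod]
      rw [hiv, Int.emod_emod_of_dvd _ dvd_rfl]
    rw [e2, show t + (y - t) = y by ring]
    exact Int.emod_eq_of_lt hy.1 hy.2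
  have hsumge : M ≤ ∑ t ∈ T, g t := by
    have h1 := Finset.card_le_card hset
    have h2 := Finset.card_biUnion_le (s := T)
      (t := fun t => (Finset.range (g t)).image (fun i : ℕ => (t + (i : ℤ)) % (M : ℤ)))
    have h3 : ∀ t : ℤ, ((Finset.range (g t)).image (fun i : ℕ => (t + (i : ℤ)) % (M : ℤ))).card ≤ g t :=
      fun t => le_trans Finset.card_image_le (by simp)
    have hcardIco : (Finset.Ico (0 : ℤ) (M : ℤ)).card = M := by
      rw [Int.card_Ico]; omega
    calc M = (Finset.Ico (0 : ℤ) (M : ℤ)).card := hcardIco.symm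
    _ ≤ _ := h1
    _ ≤ _ := h2
    _ ≤ ∑ t ∈ T, g t := Finset.sum_le_sum (fun t _ => h3 t)
  -- pigeonhole: a big gap exists
  have hBcard : (T.image g).card = s := by
    rw [Finset.card_image_of_injOn hginj, hTcard]
  have hBsum : M ≤ ∑ b ∈ T.image g, b := by
    rw [Finset.sum_image hginj]
    exact hsumge
  obtain ⟨b, hbmem, hbG⟩ := aux_exists_big (T.image g) M (hTne.image g) hBsum
  rw [hBcard, ← hGdef] at hbG
  obtain ⟨t₀, ht₀, rfl⟩ := Finset.mem_image.mp hbmem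
  have hgub : g t₀ + 1 ≤ M := by
    obtain ⟨u, hu, hu2⟩ := hgmem t₀
    have := hflt t₀ u; omega
  have hgpos : 1 ≤ g t₀ := by
    obtain ⟨u, hu, hu2⟩ := hgmem t₀
    have := hfpos t₀ ht₀ u (Finset.mem_of_mem_erase hu) (Finset.ne_of_mem_erase hu)
    omega
  -- the translated set
  set φ : ℤ → ℤ := fun x => (x - t₀ - (g t₀ : ℤ)) % (M : ℤ) + 1 with hφ
  refine ⟨T.image φ, ?_, ?_, ?_⟩
  · -- subset of Icc 1 N
    intro a ha
    rw [Finset.mem_image] at ha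
    obtain ⟨x, hxT, rfl⟩ := ha
    rw [Finset.mem_Icc]
    constructor
    · have h := Int.emod_nonneg (x - t₀ - (g t₀ : ℤ)) (ne_of_gt hMz)
      simp only [hφ]
      omega
    · simp only [hφ]
      by_cases hxt : x = t₀
      · rw [hxt]
        have e : (t₀ - t₀ - (g t₀ : ℤ)) % (M : ℤ) = (M : ℤ) - (g t₀ : ℤ) := by
          have e1 : t₀ - t₀ - (g t₀ : ℤ) = ((M : ℤ) - (g t₀ : ℤ)) + (M : ℤ) * (-1) := by ring
          rw [e1, Int.add_mul_emod_self_left, Int.emod_eq_of_lt (by omega) (by omega)]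
        rw [e]
        omega
      · have hgap : (g t₀ : ℤ) ≤ (x - t₀) % (M : ℤ) := by
          have h := hgle t₀ x (Finset.mem_erase.mpr ⟨hxt, hxT⟩)
          calc (g t₀ : ℤ) ≤ (f t₀ x : ℤ) := by exact_mod_cast h
          _ = _ := hfval t₀ x
        have hlt : (x - t₀) % (M : ℤ) < (M : ℤ) := Int.emod_lt_of_pos _ hMz
        have e : (x - t₀ - (g t₀ : ℤ)) % (M : ℤ) = (x - t₀) % (M : ℤ) - (g t₀ : ℤ) := by
          rw [Int.sub_emod (x - t₀) _ _,
            Int.emod_eq_of_lt (by positivity) (by omega : ((g t₀ : ℤ)) < (M : ℤ))]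
          exact Int.emod_eq_of_lt (by omega) (by omega)
        rw [e]
        omega
  · -- Sidon
    intro a ha b hb c hc d hd habcd
    rw [Finset.mem_image] at ha hb hc hd
    obtain ⟨x1, hx1, rfl⟩ := ha
    obtain ⟨x2, hx2, rfl⟩ := hb
    obtain ⟨x3, hx3, rfl⟩ := hc
    obtain ⟨x4, hx4, rfl⟩ := hd
    have hmd : ∀ z : ℤ, (M : ℤ) ∣ φ z - (z - t₀ - (g t₀ : ℤ) + 1) := by
      intro z
      have h := Int.emod_add_mul_ediv (z - t₀ - (g t₀ : ℤ)) (M : ℤ)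
      exact ⟨-((z - t₀ - (g t₀ : ℤ)) / (M : ℤ)), by simp only [hφ]; linear_combination h⟩
    have key : (M : ℤ) ∣ (x1 + x2) - (x3 + x4) := by
      have h5 := dvd_sub (dvd_add (hmd x1) (hmd x2)) (dvd_add (hmd x3) (hmd x4))
      have e : (φ x1 - (x1 - t₀ - (g t₀ : ℤ) + 1) + (φ x2 - (x2 - t₀ - (g t₀ : ℤ) + 1))) -
          (φ x3 - (x3 - t₀ - (g t₀ : ℤ) + 1) + (φ x4 - (x4 - t₀ - (g t₀ : ℤ) + 1))) =
          -((x1 + x2) - (x3 + x4)) := by linear_combination habcd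
      rw [e] at h5
      exact dvd_neg.mp h5
    rcases hTmod x1 hx1 x2 hx2 x3 hx3 x4 hx4 key with ⟨e1, e2⟩ | ⟨e1, e2⟩
    · exact Or.inl ⟨by rw [e1], by rw [e2]⟩
    · exact Or.inr ⟨by rw [e1], by rw [e2]⟩
  · -- card
    rw [Finset.card_image_of_injOn, hTcard]
    intro x hx y hy hxy
    have h1 : (x - t₀ - (g t₀ : ℤ)) % (M : ℤ) = (y - t₀ - (g t₀ : ℤ)) % (M : ℤ) := by
      simp only [hφ] at hxy
      omega
    have h2 : (M : ℤ) ∣ (y - t₀ - (g t₀ : ℤ)) - (x - t₀ - (g t₀ : ℤ)) := Int.ModEq.dvd h1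
    have h3 : (M : ℤ) ∣ x - y := by
      have e : x - y = -((y - t₀ - (g t₀ : ℤ)) - (x - t₀ - (g t₀ : ℤ))) := by ring
      rw [e]; exact dvd_neg.mpr h2
    obtain ⟨hx1, hx2⟩ := hbd x hx
    obtain ⟨hy1, hy2⟩ := hbd y hy
    exact aux_eq_of_dvd_s8 (M : ℤ) x y h3 hx1 hx2 hy1 hy2
end

section
/- For every integer N ≥ 1, h(N) ≤ √(2N) + 1 (as an inequality of real numbers). -/
open Classical in
/-- `sidonMax N` is the maximum cardinality of a Sidon subset of `{1, …, N}`. -/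
noncomputable def sidonMax (N : ℕ) : ℕ :=
  ((Finset.Icc (1 : ℤ) N).powerset.filter fun A => IsSidon A).sup Finset.card

lemma sidon_card_bound (N : ℕ) (hN : 1 ≤ N) (A : Finset ℤ)
    (hsub : A ⊆ Finset.Icc (1 : ℤ) N) (hS : IsSidon A) :
    A.card * A.card - A.card ≤ 2 * N - 2 := by
  have hinj : Set.InjOn (fun p : ℤ × ℤ => p.1 - p.2) ↑A.offDiag := by
    rintro ⟨a, b⟩ hp ⟨c, d⟩ hq h
    simp only [Finset.coe_offDiag, Set.mem_offDiag] at hp hq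
    obtain ⟨ha, hb, hab⟩ := hp
    obtain ⟨hc, hd, hcd⟩ := hq
    simp only at h
    have : a + d = c + b := by linarith
    rcases hS a ha d hd c hc b hb this with ⟨h1, h2⟩ | ⟨h1, h2⟩
    · simp [h1, h2]
    · exact absurd h1 hab
  have hmap : ∀ p ∈ A.offDiag,
      (fun p : ℤ × ℤ => p.1 - p.2) p ∈ (Finset.Icc (1 - (N : ℤ)) (N - 1)).erase 0 := by
    rintro ⟨a, b⟩ hp
    simp only [Finset.mem_offDiag] at hp
    obtain ⟨ha, hb, hab⟩ := hp
    have ha' := Finset.mem_Icc.mp (hsub ha)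
    have hb' := Finset.mem_Icc.mp (hsub hb)
    simp only [Finset.mem_erase, Finset.mem_Icc]
    refine ⟨sub_ne_zero_of_ne hab, by omega, by omega⟩
  have hcard := Finset.card_le_card_of_injOn _ hmap hinj
  rw [Finset.offDiag_card] at hcard
  have h0 : (0 : ℤ) ∈ Finset.Icc (1 - (N : ℤ)) (N - 1) := by
    simp only [Finset.mem_Icc]; omega
  rw [Finset.card_erase_of_mem h0, Int.card_Icc] at hcard
  have : ((N : ℤ) - 1 + 1 - (1 - N)).toNat = 2 * N - 1 := by omega
  rw [this] at hcard
  omega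

/-- Pair-difference upper bound: `h(N) ≤ √(2N) + 1` for `N ≥ 1`. -/
theorem sidonMax_le_sqrt_two (N : ℕ) (hN : 1 ≤ N) :
    (sidonMax N : ℝ) ≤ Real.sqrt (2 * N) + 1 := by
  classical
  have hne : (((Finset.Icc (1 : ℤ) N).powerset.filter fun A => IsSidon A)).Nonempty := by
    refine ⟨∅, ?_⟩
    exact Finset.mem_filter.mpr ⟨Finset.empty_mem_powerset _, fun a ha => by simp at ha⟩
  obtain ⟨A, hA, hcard⟩ :=
    Finset.exists_mem_eq_sup ((Finset.Icc (1 : ℤ) N).powerset.filter fun A => IsSidon A)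
      hne Finset.card
  simp only [Finset.mem_filter, Finset.mem_powerset] at hA
  obtain ⟨hsub, hS⟩ := hA
  have key := sidon_card_bound N hN A hsub hS
  rw [sidonMax, hcard]
  set k := A.card with hk
  have hreal : (k : ℝ) * k - k ≤ 2 * N - 2 := by
    have := (Nat.cast_le (α := ℝ)).mpr key
    push_cast at this ⊢
    have e1 : ((k * k - k : ℕ) : ℝ) = (k : ℝ) * k - k := by
      have : (k : ℕ) ≤ k * k := by nlinarith [Nat.zero_le k]
      push_cast [Nat.cast_sub this]; ring
    have e2 : ((2 * N - 2 : ℕ) : ℝ) = 2 * N - 2 := by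
      have : (2 : ℕ) ≤ 2 * N := by omega
      push_cast [Nat.cast_sub this]; ring
    rw [e1, e2] at this
    exact this
  have hs : Real.sqrt (2 * N) ^ 2 = 2 * N := Real.sq_sqrt (by positivity)
  have hs0 : 0 ≤ Real.sqrt (2 * N) := Real.sqrt_nonneg _
  nlinarith [Nat.cast_nonneg (α := ℝ) k, sq_nonneg ((k : ℝ) - 1 - Real.sqrt (2 * N))]
end

section
/- For every integer N ≥ 16, h(N) ≤ ⌊√N⌋ + ⌊√(⌊√N⌋)⌋ + 2, where ⌊√·⌋ denotes the natural-number integer square root. -/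
open Finset in
/-- Gauss sum. -/
lemma gauss_aux (n : ℕ) : (∑ i ∈ range n, ((i : ℤ) + 1)) * 2 = n * (n + 1) := by
  induction n with
  | zero => simp
  | succ n ih =>
    rw [Finset.sum_range_succ, add_mul, ih]
    push_cast
    ring

open Finset in
/-- A finset of integers all ≥ 1 has sum at least 1 + 2 + ⋯ + card. -/
lemma sum_lb (B : Finset ℤ) (h : ∀ x ∈ B, 1 ≤ x) :
    ∑ i ∈ range B.card, ((i : ℤ) + 1) ≤ ∑ x ∈ B, x := by
  induction B using Finset.strongInduction with
  | _ B ih =>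
    rcases B.eq_empty_or_nonempty with hB | hB
    · simp [hB]
    · set M := B.max' hB with hM
      have hMB : M ∈ B := B.max'_mem hB
      have hM1 : 1 ≤ M := h M hMB
      -- card bound : (B.card : ℤ) ≤ M
      have hsub : B ⊆ Finset.Icc 1 M := by
        intro x hx
        exact Finset.mem_Icc.2 ⟨h x hx, B.le_max' x hx⟩
      have hcard : (B.card : ℤ) ≤ M := by
        have := Finset.card_le_card hsub
        rw [Int.card_Icc] at this
        have h2 : (M + 1 - 1).toNat = M.toNat := by omega
        rw [h2] at this
        omega
      have hcardpos : 1 ≤ B.card := Finset.card_pos.2 hB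
      have herase : B.erase M ⊂ B := Finset.erase_ssubset hMB
      have hcard' : (B.erase M).card = B.card - 1 := Finset.card_erase_of_mem hMB
      have ihe := ih (B.erase M) herase (fun x hx => h x (Finset.mem_of_mem_erase hx))
      have hsum : M + ∑ x ∈ B.erase M, x = ∑ x ∈ B, x :=
        Finset.add_sum_erase B id hMB
      have hrange : B.card = (B.card - 1) + 1 := by omega
      rw [hrange, Finset.sum_range_succ]
      rw [hcard'] at ihe
      have : ((B.card - 1 : ℕ) : ℤ) + 1 = (B.card : ℤ) := by
        push_cast [Nat.cast_sub hcardpos]; ring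
      rw [this]
      linarith

open Finset in
/-- Core counting lemma (Lindström): for a Sidon sequence `g` of length `K` with values
in `[1, N]`, summing the distinct differences with gap at most `m` gives
`∑_{i < T} (i+1) ≤ (N-1) ∑_{j<m} (j+1)` where `T = ∑_{j<m} (K-(j+1))`. -/
lemma core (K m : ℕ) (N : ℤ) (g : ℕ → ℤ)
    (hmono : ∀ a b : ℕ, a < b → b < K → g a < g b)
    (hmem : ∀ n, n < K → 1 ≤ g n ∧ g n ≤ N)
    (hsidon : ∀ a b c d : ℕ, a < K → b < K → c < K → d < K →
       g a + g b = g c + g d → (g a = g c ∧ g b = g d) ∨ (g a = g d ∧ g b = g c))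
    (hmK : m < K) :
    ∑ i ∈ range (∑ j ∈ range m, (K - (j+1))), ((i : ℤ) + 1)
      ≤ (N - 1) * ∑ j ∈ range m, ((j : ℤ) + 1) := by
  classical
  -- injectivity of g on indices < K
  have hginj : ∀ a b : ℕ, a < K → b < K → g a = g b → a = b := by
    intro a b ha hb hab
    rcases lt_trichotomy a b with h | h | h
    · exact absurd hab (ne_of_lt (hmono a b h hb))
    · exact h
    · exact absurd hab.symm (ne_of_lt (hmono b a h ha))
  set P : Finset ((_ : ℕ) × ℕ) := (range m).sigma (fun j => range (K - (j+1))) with hP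
  set φ : (Σ _ : ℕ, ℕ) → ℤ := fun p => g (p.2 + p.1 + 1) - g p.2 with hφ
  have hmemP : ∀ p ∈ P, p.1 < m ∧ p.2 < K - (p.1 + 1) := by
    intro p hp
    rw [hP, Finset.mem_sigma, Finset.mem_range, Finset.mem_range] at hp
    exact hp
  have hidx : ∀ p ∈ P, p.2 + p.1 + 1 < K ∧ p.2 < K := by
    intro p hp
    have := hmemP p hp
    omega
  -- injectivity of φ on P
  have hinj : ∀ p ∈ P, ∀ q ∈ P, φ p = φ q → p = q := by
    intro p hp q hq hpq
    obtain ⟨hp1, hp2⟩ := hidx p hp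
    obtain ⟨hq1, hq2⟩ := hidx q hq
    have heq : g (p.2 + p.1 + 1) + g q.2 = g (q.2 + q.1 + 1) + g p.2 := by
      simp only [hφ] at hpq; linarith
    rcases hsidon _ _ _ _ hp1 hq2 hq1 hp2 heq with ⟨h1, h2⟩ | ⟨h1, h2⟩
    · have e1 := hginj _ _ hp1 hq1 h1
      have e2 := hginj _ _ hq2 hp2 h2
      have : p.1 = q.1 := by omega
      exact Sigma.ext this (by simp [heq_iff_eq]; omega)
    · have e1 := hginj _ _ hp1 hp2 h1
      omega
  -- lower bound via sum_lb on the image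
  have hcard : (P.image φ).card = ∑ j ∈ range m, (K - (j+1)) := by
    rw [Finset.card_image_of_injOn (fun p hp q hq => hinj p hp q hq), hP,
      Finset.card_sigma]
    simp
  have hpos : ∀ x ∈ P.image φ, 1 ≤ x := by
    intro x hx
    obtain ⟨p, hp, rfl⟩ := Finset.mem_image.1 hx
    obtain ⟨hp1, hp2⟩ := hidx p hp
    have := hmono p.2 (p.2 + p.1 + 1) (by omega) hp1
    simp only [hφ]
    omega
  have hlow := sum_lb (P.image φ) hpos
  rw [hcard, Finset.sum_image hinj] at hlow
  -- upper bound: telescoping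
  have hup : ∑ p ∈ P, φ p ≤ (N - 1) * ∑ j ∈ range m, ((j : ℤ) + 1) := by
    rw [hP, Finset.sum_sigma, Finset.mul_sum]
    apply Finset.sum_le_sum
    intro j hj
    rw [Finset.mem_range] at hj
    set c := K - (j+1) with hc
    have hcK : c + (j+1) = K := by omega
    -- ∑_{i<c} (g (i+j+1) - g i) = ∑_{i<j+1} (g (c+i) - g i)
    have key : ∑ i ∈ range c, φ ⟨j, i⟩
        = ∑ i ∈ range (j+1), (g (c + i) - g i) := by
      have e1 : ∑ i ∈ range c, φ ⟨j, i⟩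
          = ∑ i ∈ range c, g ((j+1) + i) - ∑ i ∈ range c, g i := by
        rw [← Finset.sum_sub_distrib]
        apply Finset.sum_congr rfl
        intro i _
        simp only [hφ]
        ring_nf
      have e2 : ∑ i ∈ range ((j+1) + c), g i
          = ∑ i ∈ range (j+1), g i + ∑ i ∈ range c, g ((j+1) + i) :=
        Finset.sum_range_add g (j+1) c
      have e3 : ∑ i ∈ range (c + (j+1)), g i
          = ∑ i ∈ range c, g i + ∑ i ∈ range (j+1), g (c + i) :=
        Finset.sum_range_add g c (j+1)
      have e4 : (j+1) + c = c + (j+1) := by omega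
      rw [e4] at e2
      rw [e1, Finset.sum_sub_distrib]
      have : ∑ i ∈ range c, g ((j+1) + i)
          = ∑ i ∈ range (j+1), g (c + i) + (∑ i ∈ range c, g i - ∑ i ∈ range (j+1), g i) := by
        linarith [e2, e3]
      rw [this]; ring
    rw [key]
    have hbound : ∀ i ∈ range (j+1), g (c + i) - g i ≤ N - 1 := by
      intro i hi
      rw [Finset.mem_range] at hi
      have h1 : c + i < K := by omega
      have h2 : i < K := by omega
      have := hmem (c + i) h1
      have := hmem i h2
      omega
    calc ∑ i ∈ range (j+1), (g (c + i) - g i)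
        ≤ ∑ _i ∈ range (j+1), (N - 1) := Finset.sum_le_sum hbound
      _ = (N - 1) * ((j : ℤ) + 1) := by
          rw [Finset.sum_const, Finset.card_range]
          simp only [nsmul_eq_mul]
          push_cast
          ring
  linarith

open Finset in
/-- Johnson-route shift-incidence upper bound: for `N ≥ 16`,
`h(N) ≤ ⌊√N⌋ + ⌊√⌊√N⌋⌋ + 2`. -/
theorem sidonMax_le_lindstrom (N : ℕ) (hN : 16 ≤ N) :
    sidonMax N ≤ Nat.sqrt N + Nat.sqrt (Nat.sqrt N) + 2 := by
  classical
  set s := Nat.sqrt N with hs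
  set t := Nat.sqrt s with ht
  -- numerical facts
  have h16 : Nat.sqrt 16 = 4 := by
    have : (16 : ℕ) = 4 ^ 2 := by norm_num
    rw [this, Nat.sqrt_eq']
  have hs4 : 4 ≤ s := by
    have h1 : Nat.sqrt 16 ≤ Nat.sqrt N := Nat.sqrt_le_sqrt hN
    rw [h16] at h1
    exact h1
  have ht2 : 2 ≤ t := by
    have h4 : Nat.sqrt 4 = 2 := by
      have : (4 : ℕ) = 2 ^ 2 := by norm_num
      rw [this, Nat.sqrt_eq']
    have h1 : Nat.sqrt 4 ≤ Nat.sqrt s := Nat.sqrt_le_sqrt hs4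
    rw [h4] at h1
    exact h1
  have hts : t * t ≤ s := Nat.sqrt_le s
  have hst : s ≤ t * t + 2 * t := by
    have h := Nat.lt_succ_sqrt s
    rw [← ht, Nat.succ_eq_add_one] at h
    nlinarith
  have hNs : N ≤ s * s + 2 * s := by
    have h := Nat.lt_succ_sqrt N
    rw [← hs, Nat.succ_eq_add_one] at h
    nlinarith
  have hsN : s * s ≤ N := Nat.sqrt_le N
  apply Finset.sup_le
  intro A hA
  rw [Finset.mem_filter, Finset.mem_powerset] at hA
  obtain ⟨hAsub, hAsidon⟩ := hA
  by_contra hcon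
  push_neg at hcon
  set K := s + t + 3 with hK
  have hKA : K ≤ A.card := by omega
  obtain ⟨B, hBA, hBcard⟩ := Finset.exists_subset_card_eq hKA
  have hBsub : B ⊆ Finset.Icc (1 : ℤ) N := hBA.trans hAsub
  set f := B.orderEmbOfFin hBcard with hf
  set g : ℕ → ℤ := fun n => if h : n < K then f ⟨n, h⟩ else 0 with hg
  have hgB : ∀ n (h : n < K), g n ∈ B := by
    intro n h
    simp only [hg, dif_pos h]
    exact Finset.orderEmbOfFin_mem B hBcard ⟨n, h⟩
  have hmono : ∀ a b : ℕ, a < b → b < K → g a < g b := by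
    intro a b hab hb
    have ha : a < K := lt_trans hab hb
    simp only [hg, dif_pos ha, dif_pos hb]
    exact f.strictMono (show (⟨a, ha⟩ : Fin K) < ⟨b, hb⟩ from hab)
  have hmem : ∀ n, n < K → 1 ≤ g n ∧ g n ≤ (N : ℤ) := by
    intro n h
    have := hBsub (hgB n h)
    rw [Finset.mem_Icc] at this
    exact this
  have hsidon : ∀ a b c d : ℕ, a < K → b < K → c < K → d < K →
      g a + g b = g c + g d → (g a = g c ∧ g b = g d) ∨ (g a = g d ∧ g b = g c) := by
    intro a b c d ha hb hc hd heq
    exact hAsidon _ (hBA (hgB a ha)) _ (hBA (hgB b hb)) _ (hBA (hgB c hc))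
      _ (hBA (hgB d hd)) heq
  set m := t + 1 with hm
  have hmK : m < K := by omega
  have hcore := core K m (N : ℤ) g hmono hmem hsidon hmK
  -- compute T
  set T := ∑ j ∈ range m, (K - (j+1)) with hT
  have hT2 : (T : ℤ) * 2 = (t + 1) * (2 * s + t + 4) := by
    have hTval : (T : ℤ) = ∑ j ∈ range m, ((s : ℤ) + t + 2 - j) := by
      rw [hT, Nat.cast_sum]
      apply Finset.sum_congr rfl
      intro j hj
      rw [Finset.mem_range] at hj
      have h1 : j + 1 ≤ K := by omega
      have : (K - (j+1) : ℕ) = (s + t + 2 - j : ℕ) := by omega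
      rw [this]
      have h2 : j ≤ s + t + 2 := by omega
      push_cast [Nat.cast_sub h2]
      ring
    rw [hTval]
    have : ∑ j ∈ range m, ((s : ℤ) + t + 2 - j)
        = (∑ j ∈ range m, ((s : ℤ) + t + 3)) - ∑ j ∈ range m, ((j : ℤ) + 1) := by
      rw [← Finset.sum_sub_distrib]
      apply Finset.sum_congr rfl
      intro j _; ring
    rw [this, Finset.sum_const, Finset.card_range]
    have hg2 := gauss_aux m
    simp only [nsmul_eq_mul, hm] at *
    push_cast
    push_cast at hg2
    linear_combination -hg2
  have hgT := gauss_aux T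
  have hgm := gauss_aux m
  -- T(T+1) ≤ (N-1) m (m+1)
  have hineq : (T : ℤ) * (T + 1) ≤ ((N : ℤ) - 1) * (m * (m + 1)) := by
    have h2 : (∑ i ∈ range T, ((i : ℤ) + 1)) * 2
        ≤ (((N : ℤ) - 1) * ∑ j ∈ range m, ((j : ℤ) + 1)) * 2 := by linarith
    rw [hgT] at h2
    calc (T : ℤ) * (T + 1) ≤ (((N : ℤ) - 1) * ∑ j ∈ range m, ((j : ℤ) + 1)) * 2 := h2
      _ = ((N : ℤ) - 1) * ((∑ j ∈ range m, ((j : ℤ) + 1)) * 2) := by ring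
      _ = ((N : ℤ) - 1) * (m * (m + 1)) := by rw [hgm]
  -- final contradiction
  have hsZ : ((t : ℤ)) * t ≤ s := by exact_mod_cast hts
  have hstZ : (s : ℤ) ≤ t * t + 2 * t := by exact_mod_cast hst
  have hNZ : (N : ℤ) ≤ s * s + 2 * s := by exact_mod_cast hNs
  have ht2Z : (2 : ℤ) ≤ t := by exact_mod_cast ht2
  have hs4Z : (4 : ℤ) ≤ s := by exact_mod_cast hs4
  have hmZ : (m : ℤ) = t + 1 := by exact_mod_cast hm
  rw [hmZ] at hineq
  set X : ℤ := ((t : ℤ) + 1) * (2 * s + t + 4) with hX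
  have hXpos : 0 < X := by
    rw [hX]
    have h1 : (0:ℤ) < (t : ℤ) + 1 := by positivity
    have h2 : (0:ℤ) < 2 * (s:ℤ) + t + 4 := by positivity
    exact mul_pos h1 h2
  have e2 : X * (X + 2) ≤ 4 * (((N : ℤ) - 1) * (((t:ℤ) + 1) * ((t:ℤ) + 1 + 1))) := by
    have h4 := mul_le_mul_of_nonneg_left hineq (by norm_num : (0:ℤ) ≤ 4)
    calc X * (X + 2) = ((T:ℤ) * 2) * (((T:ℤ) * 2) + 2) := by rw [hT2]
      _ = 4 * ((T:ℤ) * ((T:ℤ) + 1)) := by ring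
      _ ≤ 4 * (((N : ℤ) - 1) * (((t:ℤ) + 1) * ((t:ℤ) + 1 + 1))) := h4
  have e2' : X * (X + 2) ≤ 4 * (((s:ℤ) * s + 2 * s - 1) * (((t:ℤ) + 1) * ((t:ℤ) + 2))) := by
    have hNn : ((N : ℤ) - 1) ≤ (s:ℤ) * s + 2 * s - 1 := by linarith
    have hnn : (0:ℤ) ≤ ((t:ℤ) + 1) * ((t:ℤ) + 2) := by positivity
    nlinarith [mul_le_mul_of_nonneg_right hNn hnn]
  have e3 : X * X - 4 * (((s:ℤ) * s + 2 * s - 1) * (((t:ℤ) + 1) * ((t:ℤ) + 2)))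
      = ((t:ℤ) + 1) * (4 * s * ((t:ℤ) * t + 3 * t - s) + ((t:ℤ) + 1) * ((t:ℤ) + 4) ^ 2 + 4 * t + 8) := by
    rw [hX]; ring
  have e4 : (0:ℤ) < ((t:ℤ) + 1) * (4 * s * ((t:ℤ) * t + 3 * t - s) + ((t:ℤ) + 1) * ((t:ℤ) + 4) ^ 2 + 4 * t + 8) := by
    have h1 : (0:ℤ) ≤ 4 * (s:ℤ) * ((t:ℤ) * t + 3 * t - s) := by
      apply mul_nonneg
      · positivity
      · linarith
    have h2 : (0:ℤ) < ((t:ℤ) + 1) * ((t:ℤ) + 4) ^ 2 := by positivity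
    have h3 : (0:ℤ) < (t:ℤ) + 1 := by positivity
    apply mul_pos h3
    linarith
  linarith [e2', e3, e4, hXpos]
end

section
/- For every integer N ≥ 5, h(N) > ⌊(⌊√N⌋ + 1) / 2⌋, where ⌊√·⌋ denotes the natural-number integer square root and the outer division is natural-number (floor) division. -/
/-- Singer construction: for a prime `p`, there is a Sidon subset of
`{1, …, p² + p + 1}` of cardinality `p + 1`. -/
theorem singer_aux (p : ℕ) (hp : p.Prime) :
    ∃ S : Finset ℤ, S ⊆ Finset.Icc (1 : ℤ) ((p ^ 2 + p + 1 : ℕ) : ℤ) ∧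
      IsSidon S ∧ S.card = p + 1 := by
  classical
  haveI : Fact p.Prime := ⟨hp⟩
  have hp2 : 2 ≤ p := hp.two_le
  set n : ℕ := p ^ 2 + p + 1 with hn_def
  set F := GaloisField p 3 with hF
  obtain ⟨g, hg⟩ := IsCyclic.exists_generator (α := Fˣ)
  set A : ZMod p →+* F := algebraMap (ZMod p) F with hA
  set ζ : F := (g : F) with hζ
  have injA : Function.Injective A := A.injective
  have hcardF : Nat.card F = p ^ 3 := GaloisField.card p 3 (by norm_num)
  have hordg : orderOf g = p ^ 3 - 1 := by
    rw [orderOf_eq_card_of_forall_mem_zpowers hg, Nat.card_units, hcardF]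
  have hp3 : 1 ≤ p ^ 3 := Nat.one_le_pow _ _ (by omega)
  have hfact : p ^ 3 - 1 = n * (p - 1) := by
    have h1 : 1 ≤ p := by omega
    zify [h1, hp3, hn_def]
    push_cast
    ring
  have hn7 : 7 ≤ n := by
    have : 2 ^ 2 + 2 + 1 ≤ p ^ 2 + p + 1 := by
      have := Nat.pow_le_pow_left hp2 2
      omega
    omega
  -- exponents lemma
  have hdiv : ∀ m : ℕ, g ^ (m * (p - 1)) = 1 → n ∣ m := by
    intro m hm
    have h := orderOf_dvd_of_pow_eq_one hm
    rw [hordg, hfact] at h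
    exact (Nat.mul_dvd_mul_iff_right (by omega : 0 < p - 1)).mp h
  have scalar_pow : ∀ c : ZMod p, c ≠ 0 → (A c) ^ (p - 1) = 1 := by
    intro c hc
    rw [← map_pow, ZMod.pow_card_sub_one_eq_one hc, map_one]
  have zeta_pow_ne : ∀ m : ℕ, ζ ^ m ≠ 0 := by
    intro m
    have : ζ ^ m = ((g ^ m : Fˣ) : F) := by rw [Units.val_pow_eq_pow_val]
    rw [this]
    exact Units.ne_zero _
  have expinj : ∀ i j : ℕ, i < n → j < n → ∀ c : ZMod p, ζ ^ i = A c * ζ ^ j → i = j := by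
    have key : ∀ c : ZMod p, c ≠ 0 → ∀ a b : ℕ, b ≤ a → ζ ^ a = A c * ζ ^ b →
        a < n → b < n → a = b := by
      intro c hc0 a b hba hab ha hb
      have hpow : ζ ^ (a * (p - 1)) = ζ ^ (b * (p - 1)) := by
        calc ζ ^ (a * (p - 1)) = (ζ ^ a) ^ (p - 1) := by rw [← pow_mul]
          _ = (A c) ^ (p - 1) * (ζ ^ b) ^ (p - 1) := by rw [hab, mul_pow]
          _ = (ζ ^ b) ^ (p - 1) := by rw [scalar_pow c hc0, one_mul]
          _ = ζ ^ (b * (p - 1)) := by rw [← pow_mul]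
      have hu : g ^ (a * (p - 1)) = g ^ (b * (p - 1)) := by
        apply Units.ext
        simpa [Units.val_pow_eq_pow_val] using hpow
      have h4 : g ^ ((a - b) * (p - 1)) * g ^ (b * (p - 1)) = 1 * g ^ (b * (p - 1)) := by
        rw [← pow_add, ← Nat.add_mul, Nat.sub_add_cancel hba, hu, one_mul]
      have h1 : g ^ ((a - b) * (p - 1)) = 1 := mul_right_cancel h4
      have h5 : a - b = 0 := Nat.eq_zero_of_dvd_of_lt (hdiv _ h1) (by omega) |>.symm ▸ rfl
      omega
    intro i j hi hj c hc
    have hc0 : c ≠ 0 := by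
      rintro rfl
      rw [map_zero, zero_mul] at hc
      exact zeta_pow_ne i hc
    rcases le_total j i with h | h
    · exact key c hc0 i j h hc hi hj
    · have hinv : ζ ^ j = A c⁻¹ * ζ ^ i := by
        rw [hc, ← mul_assoc, ← map_mul, inv_mul_cancel₀ hc0, map_one, one_mul]
      exact (key c⁻¹ (inv_ne_zero hc0) j i h hinv hj hi).symm
  have notK : ∀ d : ℕ, 0 < d → d < n → ¬∃ c : ZMod p, A c = ζ ^ d := by
    rintro d hd1 hd2 ⟨c, hc⟩
    have : ζ ^ d = A c * ζ ^ 0 := by rw [pow_zero, mul_one, hc]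
    have := expinj d 0 hd2 (by omega) c this
    omega
  -- linear independence of 1, ζ
  have indep : ∀ a b : ZMod p, A a + A b * ζ = 0 → a = 0 ∧ b = 0 := by
    intro a b hab
    by_cases hb : b = 0
    · subst hb
      rw [map_zero, zero_mul, add_zero] at hab
      exact ⟨injA (by rw [hab, map_zero]), rfl⟩
    · exfalso
      apply notK 1 (by omega) (by omega)
      have hAb : A b ≠ 0 := fun h0 => hb (injA (by rw [h0, map_zero]))
      refine ⟨-(a * b⁻¹), ?_⟩
      rw [pow_one]
      have hbb : A (-(a * b⁻¹)) * A b = A b * ζ := by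
        rw [← map_mul]
        have h2 : -(a * b⁻¹) * b = -a := by field_simp
        rw [h2, map_neg]
        linear_combination -hab
      exact mul_right_cancel₀ hAb (hbb.trans (mul_comm _ _))
  have indep2 : ∀ a b c d : ZMod p, A a + A b * ζ = A c + A d * ζ → a = c ∧ b = d := by
    intro a b c d h
    have h0 : A (a - c) + A (b - d) * ζ = 0 := by
      rw [map_sub, map_sub]
      linear_combination h
    have h1 := indep _ _ h0
    exact ⟨sub_eq_zero.mp h1.1, sub_eq_zero.mp h1.2⟩
  -- elements fixed by Frobenius are scalars
  have rootsK : ∀ y : F, y ^ p = y → ∃ c : ZMod p, A c = y := by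
    intro y hy
    by_contra hy'
    push_neg at hy'
    haveI : Fintype F := Fintype.ofFinite F
    set f : Polynomial F := Polynomial.X ^ p - Polynomial.X with hf
    have hdeg : f.natDegree = p := by
      rw [hf, Polynomial.natDegree_sub_eq_left_of_natDegree_lt] <;>
        simp [Polynomial.natDegree_X_pow, Polynomial.natDegree_X] <;> omega
    have hf0 : f ≠ 0 := by
      intro h0
      rw [h0, Polynomial.natDegree_zero] at hdeg
      omega
    set T0 : Finset F := insert y (Finset.univ.image A) with hT0
    have hroot : ∀ z ∈ T0, f.IsRoot z := by
      intro z hz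
      rw [hT0, Finset.mem_insert] at hz
      have : z ^ p = z := by
        rcases hz with rfl | hz
        · exact hy
        · obtain ⟨c, _, rfl⟩ := Finset.mem_image.mp hz
          rw [← map_pow, ZMod.pow_card]
      simp [hf, Polynomial.IsRoot, this]
    have hsub : T0 ⊆ f.roots.toFinset := by
      intro z hz
      rw [Multiset.mem_toFinset, Polynomial.mem_roots hf0]
      exact hroot z hz
    have hcardT0 : T0.card = p + 1 := by
      rw [hT0, Finset.card_insert_of_notMem, Finset.card_image_of_injective _ injA,
        Finset.card_univ, ZMod.card]
      intro hmem
      obtain ⟨c, _, hc⟩ := Finset.mem_image.mp hmem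
      exact hy' c hc
    have h1 := Finset.card_le_card hsub
    have h2 := Multiset.toFinset_card_le f.roots
    have h3 := Polynomial.card_roots' f
    omega
  -- ζ ^ n is a scalar
  obtain ⟨κ, hκ, hκ0⟩ : ∃ κ : ZMod p, A κ = ζ ^ n ∧ κ ≠ 0 := by
    have hord : g ^ (n * (p - 1)) = 1 := by
      rw [← hfact, ← hordg, pow_orderOf_eq_one]
    have h1 : (ζ ^ n) ^ (p - 1) = 1 := by
      have := congrArg (Units.val) hord
      simpa [Units.val_pow_eq_pow_val, pow_mul] using this
    have h2 : (ζ ^ n) ^ p = ζ ^ n := by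
      have : p - 1 + 1 = p := by omega
      calc (ζ ^ n) ^ p = (ζ ^ n) ^ (p - 1 + 1) := by rw [this]
        _ = (ζ ^ n) ^ (p - 1) * ζ ^ n := by rw [pow_succ]
        _ = ζ ^ n := by rw [h1, one_mul]
    obtain ⟨κ, hκ⟩ := rootsK _ h2
    refine ⟨κ, hκ, ?_⟩
    rintro rfl
    rw [map_zero] at hκ
    exact zeta_pow_ne n hκ.symm
  -- the key geometric lemma
  have main : ∀ x u₁ u₂ v₁ v₂ : F,
      (¬∃ c : ZMod p, A c = x) →
      (∃ a b : ZMod p, u₁ = A a + A b * ζ) → (∃ a b : ZMod p, u₂ = A a + A b * ζ) →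
      (∃ a b : ZMod p, v₁ = A a + A b * ζ) → (∃ a b : ZMod p, v₂ = A a + A b * ζ) →
      u₁ ≠ 0 → v₁ = x * u₁ → v₂ = x * u₂ →
      ∃ c : ZMod p, u₂ = A c * u₁ := by
    rintro x u₁ u₂ v₁ v₂ hx ⟨a, b, rfl⟩ ⟨c, d, rfl⟩ hV1 hV2 hu₁ hxu₁ hxu₂
    by_cases hdet : a * d - b * c = 0
    · by_cases ha : a = 0
      · have hb : b ≠ 0 := by
          rintro rfl
          rw [ha] at hu₁
          simp at hu₁
        have hc : c = 0 := by
          rw [ha] at hdet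
          have : b * c = 0 := by linear_combination -hdet
          rcases mul_eq_zero.mp this with h | h
          · exact absurd h hb
          · exact h
        subst ha
        subst hc
        refine ⟨d * b⁻¹, ?_⟩
        have hbb : d * b⁻¹ * b = d := by field_simp
        rw [map_zero, zero_add, zero_add, ← mul_assoc, ← map_mul, hbb]
      · have h6 : c * a⁻¹ * a = c := by field_simp
        have h8 : c * a⁻¹ * b = d := by
          have h9 : a * (c * a⁻¹ * b) = a * d := by
            field_simp
            first
            | linear_combination hdet
            | linear_combination -hdet
            | linear_combination a * hdet
            | (ring_nf; first | linear_combination hdet | linear_combination -hdet)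
          exact mul_left_cancel₀ ha h9
        refine ⟨c * a⁻¹, ?_⟩
        rw [mul_add, ← map_mul, ← mul_assoc, ← map_mul, h6, h8]
    · exfalso
      set Δ : ZMod p := a * d - b * c with hΔ
      obtain ⟨a₁, b₁, hv1⟩ := hV1
      obtain ⟨a₂, b₂, hv2⟩ := hV2
      -- x = A e + A f * ζ
      have hx1 : x = A (d / Δ) * v₁ + A (-b / Δ) * v₂ := by
        rw [hxu₁, hxu₂]
        have h1 : (1 : F) = A (d / Δ) * (A a + A b * ζ) + A (-b / Δ) * (A c + A d * ζ) := by
          have e1 : d / Δ * a + -b / Δ * c = 1 := by field_simp; ring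
          have e2 : d / Δ * b + -b / Δ * d = 0 := by field_simp; ring
          calc (1 : F) = A (d / Δ * a + -b / Δ * c) + A (d / Δ * b + -b / Δ * d) * ζ := by
                rw [e1, e2, map_one, map_zero, zero_mul, add_zero]
            _ = A (d / Δ) * (A a + A b * ζ) + A (-b / Δ) * (A c + A d * ζ) := by
                rw [map_add, map_add, map_mul, map_mul, map_mul, map_mul]
                ring
        calc x = x * 1 := by rw [mul_one]
          _ = _ := by rw [h1]; ring
      have hz1 : ζ = A (-c / Δ) * (A a + A b * ζ) + A (a / Δ) * (A c + A d * ζ) := by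
        have e1 : -c / Δ * a + a / Δ * c = 0 := by field_simp; ring
        have e2 : -c / Δ * b + a / Δ * d = 1 := by field_simp; ring
        calc ζ = A (-c / Δ * a + a / Δ * c) + A (-c / Δ * b + a / Δ * d) * ζ := by
              rw [e1, e2, map_one, map_zero, zero_add, one_mul]
          _ = _ := by
              rw [map_add, map_add, map_mul, map_mul, map_mul, map_mul]
              ring
      have hxz : x * ζ = A (-c / Δ) * v₁ + A (a / Δ) * v₂ := by
        rw [hxu₁, hxu₂]
        calc x * ζ = x * (A (-c / Δ) * (A a + A b * ζ) + A (a / Δ) * (A c + A d * ζ)) := by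
              rw [← hz1]
          _ = _ := by ring
      -- so x ∈ V : x = A e + A f ζ
      have hxV : ∃ e f : ZMod p, x = A e + A f * ζ := by
        refine ⟨d / Δ * a₁ + -b / Δ * a₂, d / Δ * b₁ + -b / Δ * b₂, ?_⟩
        rw [hx1, hv1, hv2, map_add, map_add, map_mul, map_mul, map_mul, map_mul]
        ring
      have hxzV : ∃ e f : ZMod p, x * ζ = A e + A f * ζ := by
        refine ⟨-c / Δ * a₁ + a / Δ * a₂, -c / Δ * b₁ + a / Δ * b₂, ?_⟩
        rw [hxz, hv1, hv2, map_add, map_add, map_mul, map_mul, map_mul, map_mul]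
        ring
      obtain ⟨e, f, hef⟩ := hxV
      by_cases hf : f = 0
      · exact hx ⟨e, by rw [hef, hf, map_zero, zero_mul, add_zero]⟩
      · -- ζ² ∈ V
        obtain ⟨e', f', hef'⟩ := hxzV
        have hz2 : ζ ^ 2 = A (e' / f) + A ((f' - e) / f) * ζ := by
          have hAf : A f ≠ 0 := fun h0 => hf (injA (by rw [h0, map_zero]))
          have h3 : A f * ζ ^ 2 = A e' + A (f' - e) * ζ := by
            have h4 : (A e + A f * ζ) * ζ = A e' + A f' * ζ := by rw [← hef, hef']
            rw [map_sub]
            linear_combination h4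
          have h5 : A f * (ζ ^ 2) = A f * (A (e' / f) + A ((f' - e) / f) * ζ) := by
            have s1 : f * (e' / f) = e' := by field_simp
            have s2 : f * ((f' - e) / f) = f' - e := by field_simp
            rw [h3, mul_add, ← map_mul, s1, ← mul_assoc, ← map_mul, s2]
          exact mul_left_cancel₀ hAf h5
        -- all powers of ζ lie in V
        have hpows : ∀ m : ℕ, ∃ a' b' : ZMod p, ζ ^ m = A a' + A b' * ζ := by
          intro m
          induction m with
          | zero => exact ⟨1, 0, by rw [pow_zero, map_one, map_zero, zero_mul, add_zero]⟩
          | succ m ih =>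
            obtain ⟨a', b', hab'⟩ := ih
            refine ⟨b' * (e' / f), a' + b' * ((f' - e) / f), ?_⟩
            rw [pow_succ, hab', map_mul, map_add, map_mul]
            calc (A a' + A b' * ζ) * ζ = A a' * ζ + A b' * ζ ^ 2 := by ring
              _ = A a' * ζ + A b' * (A (e' / f) + A ((f' - e) / f) * ζ) := by rw [hz2]
              _ = _ := by ring
        -- hence every element of F lies in V : contradiction with cardinality
        have hall : ∀ y : F, ∃ a' b' : ZMod p, y = A a' + A b' * ζ := by
          intro y
          by_cases hy : y = 0
          · exact ⟨0, 0, by rw [hy, map_zero, zero_mul, add_zero]⟩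
          · obtain ⟨m, hm⟩ := Submonoid.mem_powers_iff _ _ |>.mp
              (mem_powers_iff_mem_zpowers.mpr (hg (Units.mk0 y hy)))
            obtain ⟨a', b', hab'⟩ := hpows m
            refine ⟨a', b', ?_⟩
            rw [← hab']
            have := congrArg Units.val hm
            simpa [Units.val_pow_eq_pow_val] using this.symm
        have hsurj : Function.Surjective
            (fun ab : ZMod p × ZMod p => A ab.1 + A ab.2 * ζ) := by
          intro y
          obtain ⟨a', b', hab'⟩ := hall y
          exact ⟨(a', b'), hab'.symm⟩
        have hle := Nat.card_le_card_of_surjective _ hsurj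
        rw [Nat.card_prod, Nat.card_zmod, hcardF] at hle
        have : p ^ 2 < p ^ 3 := Nat.pow_lt_pow_right (by omega) (by omega)
        have : p * p = p ^ 2 := by ring
        omega
  -- discrete logarithm reduced mod n
  have exlog : ∀ y : F, y ≠ 0 → ∃ m : ℕ, ζ ^ m = y := by
    intro y hy
    obtain ⟨m, hm⟩ := Submonoid.mem_powers_iff _ _ |>.mp
      (mem_powers_iff_mem_zpowers.mpr (hg (Units.mk0 y hy)))
    exact ⟨m, by simpa [Units.val_pow_eq_pow_val] using congrArg Units.val hm⟩
  set dlog : F → ℕ := fun y =>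
    if h : ∃ m : ℕ, ζ ^ m = y then Nat.find h % n else 0 with hdlog
  have dlog_lt : ∀ y : F, dlog y < n := by
    intro y
    simp only [hdlog]
    split
    · exact Nat.mod_lt _ (by omega)
    · omega
  have dlog_spec : ∀ y : F, y ≠ 0 → ∃ c : ZMod p, c ≠ 0 ∧ y = A c * ζ ^ (dlog y) := by
    intro y hy
    obtain ⟨m0, hm0⟩ := exlog y hy
    have hex : ∃ m : ℕ, ζ ^ m = y := ⟨m0, hm0⟩
    have hdy : dlog y = Nat.find hex % n := by
      simp only [hdlog]
      rw [dif_pos hex]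
    set m := Nat.find hex with hm
    have hζm : ζ ^ m = y := Nat.find_spec hex
    refine ⟨κ ^ (m / n), pow_ne_zero _ hκ0, ?_⟩
    rw [hdy]
    calc y = ζ ^ m := hζm.symm
      _ = ζ ^ (n * (m / n) + m % n) := by rw [Nat.div_add_mod]
      _ = (ζ ^ n) ^ (m / n) * ζ ^ (m % n) := by rw [pow_add, pow_mul]
      _ = A (κ ^ (m / n)) * ζ ^ (m % n) := by rw [← hκ, ← map_pow]
  -- the p + 1 projective points on the line
  set T : Finset F := insert 1 (Finset.univ.image (fun c : ZMod p => A c + ζ)) with hT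
  have hTV : ∀ v ∈ T, (∃ a b : ZMod p, v = A a + A b * ζ) ∧ v ≠ 0 := by
    intro v hv
    rw [hT, Finset.mem_insert] at hv
    rcases hv with rfl | hv
    · exact ⟨⟨1, 0, by rw [map_one, map_zero, zero_mul, add_zero]⟩, one_ne_zero⟩
    · obtain ⟨c, _, rfl⟩ := Finset.mem_image.mp hv
      refine ⟨⟨c, 1, by rw [map_one, one_mul]⟩, ?_⟩
      intro h0
      have h1 := indep c 1 (by rw [map_one, one_mul]; exact h0)
      exact one_ne_zero h1.2
  have hinjT : Function.Injective (fun c : ZMod p => A c + ζ) := by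
    intro c c' h
    have h' : A c + A 1 * ζ = A c' + A 1 * ζ := by
      rw [map_one, one_mul]; exact h
    exact (indep2 _ _ _ _ h').1
  have h1T : (1 : F) ∉ Finset.univ.image (fun c : ZMod p => A c + ζ) := by
    intro hmem
    obtain ⟨c, _, hc⟩ := Finset.mem_image.mp hmem
    have h' : A c + A 1 * ζ = A 1 + A 0 * ζ := by
      rw [map_one, map_zero, one_mul, zero_mul, add_zero]; exact hc
    exact one_ne_zero ((indep2 _ _ _ _ h').2)
  have hTcard : T.card = p + 1 := by
    rw [hT, Finset.card_insert_of_notMem h1T, Finset.card_image_of_injective _ hinjT,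
      Finset.card_univ, ZMod.card]
  -- distinct elements of T are in distinct K⋆-cosets
  have Tprop : ∀ v ∈ T, ∀ w ∈ T, (∃ t : ZMod p, v = A t * w) → v = w := by
    rintro v hv w hw ⟨t, ht⟩
    rw [hT, Finset.mem_insert] at hv hw
    rcases hv with rfl | hv <;> rcases hw with rfl | hw
    · rfl
    · obtain ⟨c, _, rfl⟩ := Finset.mem_image.mp hw
      exfalso
      have h' : A (t * c) + A t * ζ = A 1 + A 0 * ζ := by
        rw [map_zero, zero_mul, add_zero, map_one, map_mul]
        linear_combination -ht
      have h2 := (indep2 _ _ _ _ h').2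
      rw [h2, map_zero, zero_mul] at ht
      exact one_ne_zero ht
    · obtain ⟨c, _, rfl⟩ := Finset.mem_image.mp hv
      exfalso
      rw [mul_one] at ht
      have h' : A c + A 1 * ζ = A t + A 0 * ζ := by
        rw [map_one, one_mul, map_zero, zero_mul, add_zero]; exact ht
      exact one_ne_zero (indep2 _ _ _ _ h').2
    · obtain ⟨c, _, rfl⟩ := Finset.mem_image.mp hv
      obtain ⟨c', _, rfl⟩ := Finset.mem_image.mp hw
      have h' : A c + A 1 * ζ = A (t * c') + A t * ζ := by
        rw [map_one, one_mul, map_mul]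
        linear_combination ht
      obtain ⟨h1, h2⟩ := indep2 _ _ _ _ h'
      rw [h1, ← h2, one_mul]
  -- the Sidon set
  set S : Finset ℤ := T.image (fun v => (dlog v : ℤ) + 1) with hS
  have hinjS : Set.InjOn (fun v => (dlog v : ℤ) + 1) T := by
    intro v hv w hw hvw
    have hveq : dlog v = dlog w := by simpa using hvw
    obtain ⟨⟨av, bv, hvV⟩, hv0⟩ := hTV v hv
    obtain ⟨cv, hcv0, hcv⟩ := dlog_spec v hv0
    obtain ⟨⟨aw, bw, hwV⟩, hw0⟩ := hTV w hw
    obtain ⟨cw, hcw0, hcw⟩ := dlog_spec w hw0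
    apply Tprop v hv w hw
    refine ⟨cv * cw⁻¹, ?_⟩
    have e1 : cv * cw⁻¹ * cw = cv := by field_simp
    rw [hcv, hcw, hveq, ← mul_assoc, ← map_mul, e1]
  have hScard : S.card = p + 1 := by
    rw [hS, Finset.card_image_of_injOn hinjS, hTcard]
  have hSsub : S ⊆ Finset.Icc (1 : ℤ) (n : ℤ) := by
    intro z hz
    rw [hS] at hz
    obtain ⟨v, hv, rfl⟩ := Finset.mem_image.mp hz
    rw [Finset.mem_Icc]
    have := dlog_lt v
    omega
  -- powers at the chosen indices lie on the line
  have hVd : ∀ v ∈ T, ∃ a b : ZMod p, ζ ^ (dlog v) = A a + A b * ζ := by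
    intro v hv
    obtain ⟨⟨av, bv, hvV⟩, hv0⟩ := hTV v hv
    obtain ⟨cv, hcv0, hcv⟩ := dlog_spec v hv0
    refine ⟨cv⁻¹ * av, cv⁻¹ * bv, ?_⟩
    have h0 : A cv ≠ 0 := fun h => hcv0 (injA (by rw [h, map_zero]))
    apply mul_left_cancel₀ h0
    have e1 : cv * (cv⁻¹ * av) = av := by field_simp
    have e2 : cv * (cv⁻¹ * bv) = bv := by field_simp
    calc A cv * ζ ^ (dlog v) = v := hcv.symm
      _ = A av + A bv * ζ := hvV
      _ = A cv * (A (cv⁻¹ * av) + A (cv⁻¹ * bv) * ζ) := by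
          rw [mul_add, ← map_mul, e1, ← mul_assoc, ← map_mul, e2]
  -- the combinatorial core
  have core : ∀ i j k l : ℕ, i < n → j < n → k < n → l < n →
      (∃ a b : ZMod p, ζ ^ i = A a + A b * ζ) →
      (∃ a b : ZMod p, ζ ^ j = A a + A b * ζ) →
      (∃ a b : ZMod p, ζ ^ k = A a + A b * ζ) →
      (∃ a b : ZMod p, ζ ^ l = A a + A b * ζ) →
      i + j = k + l → (i = k ∧ j = l) ∨ (i = l ∧ j = k) := by
    intro i j k l hi hj hk hl hVi hVj hVk hVl hsum
    rcases lt_trichotomy i k with h | h | h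
    · have hx := notK (k - i) (by omega) (by omega)
      have h1 : ζ ^ k = ζ ^ (k - i) * ζ ^ i := by rw [← pow_add]; congr 1; omega
      have h2 : ζ ^ j = ζ ^ (k - i) * ζ ^ l := by rw [← pow_add]; congr 1; omega
      obtain ⟨c, hc⟩ := main (ζ ^ (k - i)) (ζ ^ i) (ζ ^ l) (ζ ^ k) (ζ ^ j)
        hx hVi hVl hVk hVj (zeta_pow_ne i) h1 h2
      have := expinj l i hl hi c hc
      right; exact ⟨by omega, by omega⟩
    · left; exact ⟨h, by omega⟩
    · have hx := notK (i - k) (by omega) (by omega)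
      have h1 : ζ ^ i = ζ ^ (i - k) * ζ ^ k := by rw [← pow_add]; congr 1; omega
      have h2 : ζ ^ l = ζ ^ (i - k) * ζ ^ j := by rw [← pow_add]; congr 1; omega
      obtain ⟨c, hc⟩ := main (ζ ^ (i - k)) (ζ ^ k) (ζ ^ j) (ζ ^ i) (ζ ^ l)
        hx hVk hVj hVi hVl (zeta_pow_ne k) h1 h2
      have := expinj j k hj hk c hc
      right; exact ⟨by omega, by omega⟩
  have hSidon : IsSidon S := by
    intro a ha b hb c hc d hd habcd
    rw [hS] at ha hb hc hd
    obtain ⟨v₁, hv₁, rfl⟩ := Finset.mem_image.mp ha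
    obtain ⟨v₂, hv₂, rfl⟩ := Finset.mem_image.mp hb
    obtain ⟨v₃, hv₃, rfl⟩ := Finset.mem_image.mp hc
    obtain ⟨v₄, hv₄, rfl⟩ := Finset.mem_image.mp hd
    have hsum : dlog v₁ + dlog v₂ = dlog v₃ + dlog v₄ := by omega
    have hcore := core (dlog v₁) (dlog v₂) (dlog v₃) (dlog v₄)
      (dlog_lt v₁) (dlog_lt v₂) (dlog_lt v₃) (dlog_lt v₄)
      (hVd _ hv₁) (hVd _ hv₂) (hVd _ hv₃) (hVd _ hv₄) hsum
    rcases hcore with ⟨h1, h2⟩ | ⟨h1, h2⟩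
    · left; constructor <;> omega
    · right; constructor <;> omega
  exact ⟨S, hSsub, hSidon, hScard⟩



/-- Singer-via-Bertrand lower bound: for `N ≥ 5`,
`h(N) > ⌊(⌊√N⌋ + 1) / 2⌋`. -/
theorem sidonMax_gt_sqrt_div_two (N : ℕ) (hN : 5 ≤ N) :
    sidonMax N > (Nat.sqrt N + 1) / 2 := by
  classical
  have lb : ∀ S : Finset ℤ, S ⊆ Finset.Icc 1 (N : ℤ) → IsSidon S → S.card ≤ sidonMax N := by
    intro S hsub hsid
    apply Finset.le_sup (f := Finset.card)
    simp only [Finset.mem_filter, Finset.mem_powerset]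
    exact ⟨hsub, hsid⟩
  set s := Nat.sqrt N with hs_def
  have hs2 : 2 ≤ s := by
    rw [hs_def]
    exact Nat.le_sqrt.mpr (by omega)
  have hsN : s ^ 2 ≤ N := by
    rw [hs_def]
    exact Nat.sqrt_le' N
  by_cases hsmall : s ≤ 2
  · have hsub : ({1, 2} : Finset ℤ) ⊆ Finset.Icc 1 (N : ℤ) := by
      intro z hz
      simp only [Finset.mem_insert, Finset.mem_singleton] at hz
      rw [Finset.mem_Icc]
      rcases hz with rfl | rfl <;> constructor <;> omega
    have hsid : IsSidon ({1, 2} : Finset ℤ) := by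
      intro a ha b hb c hc d hd h
      simp only [Finset.mem_insert, Finset.mem_singleton] at ha hb hc hd
      rcases ha with rfl | rfl <;> rcases hb with rfl | rfl <;>
        rcases hc with rfl | rfl <;> rcases hd with rfl | rfl <;> omega
    have hcard : ({1, 2} : Finset ℤ).card = 2 := by decide
    have := lb _ hsub hsid
    have hbound : (s + 1) / 2 ≤ 1 := by omega
    omega
  · push_neg at hsmall
    obtain ⟨q, hq, hq1, hq2⟩ := Nat.exists_prime_lt_and_le_two_mul ((s - 1) / 2) (by omega)
    have hqs : q ≤ s - 1 := by omega
    have hql : (s + 1) / 2 ≤ q := by omega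
    have hn_le : q ^ 2 + q + 1 ≤ N := by
      have h1 : q ^ 2 ≤ (s - 1) ^ 2 := Nat.pow_le_pow_left hqs 2
      obtain ⟨t, ht⟩ : ∃ t, s = t + 3 := ⟨s - 3, by omega⟩
      have h4 : s - 1 = t + 2 := by omega
      have h2 : (s - 1) ^ 2 + (s - 1) + 1 ≤ s ^ 2 := by
        rw [h4, ht]
        nlinarith [sq_nonneg t]
      linarith
    obtain ⟨S, hS1, hS2, hS3⟩ := singer_aux q hq
    have hsub : S ⊆ Finset.Icc 1 (N : ℤ) := by
      refine hS1.trans (Finset.Icc_subset_Icc le_rfl ?_)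
      exact_mod_cast hn_le
    have hle := lb S hsub hS2
    omega
end
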